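/- For all integers q ≥ 2 and s ≥ 2 there exist constants ε₀ > 0, δ₀ > 0, an integer L₀ > 0, and constants C₁, C₂ > 0 such that the following holds. Suppose f : ℕ → ℂ is q-multiplicative with |f(n)| = 1 for all n, p is a real polynomial of degree < s, 0 < ε < ε₀, 0 < δ < δ₀, L ≥ L₀ is an integer, and for δ-almost all n < q^L there exists θ_n ∈ ℝ with |θ_n| ≤ ε and f(n) = e(p(n) + θ_n). Then there exist α, β ∈ ℝ and a polynomial b with rational coefficients such that the sequence n ↦ b(n) mod 1 is periodic with some period that is a power of q not exceeding q^{C₁}, and for δ-almost all n < q^L there exists θ'_n ∈ ℝ with |θ'_n| ≤ C₂·ε and f(n) = e(αn + β + b(n) + θ'_n). -/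

import Mathlib

open Finset Complex

noncomputable section

/-- A sequence is `q`-multiplicative if `f (m + n) = f m * f n` whenever
`m < q ^ t` and `q ^ t ∣ n`. -/
def QMult (q : ℕ) (f : ℕ → ℂ) : Prop :=
  ∀ t m n : ℕ, m < q ^ t → q ^ t ∣ n → f (m + n) = f m * f n

/-- `e x = exp (2 π i x)`. -/
def e (x : ℝ) : ℂ := Complex.exp (2 * Real.pi * Complex.I * x)

/-- The weight `|ω|` of `ω ∈ {0,1}^s`: the number of coordinates equal to `1`. -/
def wt {s : ℕ} (ω : Fin s → Bool) : ℕ := (Finset.univ.filter fun i => ω i = true).card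

/-- The vertex `n₀ + ω₁ n₁ + ⋯ + ω_s n_s` of a parallelepiped. -/
def vertex (s : ℕ) (n : Fin (s + 1) → ℤ) (ω : Fin s → Bool) : ℤ :=
  n 0 + ∑ i : Fin s, if ω i then n i.succ else 0

/-- The set `Π_s(N)` of (s+1)-tuples all of whose associated vertices lie in `[0, N)`.
(Any such tuple automatically has all entries in `[-N, N]`.) -/
def PiSet (s N : ℕ) : Finset (Fin (s + 1) → ℤ) :=
  (Finset.Icc (fun _ => -(N : ℤ)) fun _ => (N : ℤ)).filter fun n =>
    ∀ ω : Fin s → Bool, 0 ≤ vertex s n ω ∧ vertex s n ω < N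

/-- The Gowers product `∏_ω conj^{|ω|} f(n₀ + ω·n)`. -/
def gowersTerm (s : ℕ) (f : ℕ → ℂ) (n : Fin (s + 1) → ℤ) : ℂ :=
  ∏ ω : Fin s → Bool, (starRingEnd ℂ)^[wt ω] (f (vertex s n ω).toNat)

/-- The Gowers average `‖f‖_{U^s[N]}^{2^s}` (as a complex number; it is in fact
real and nonnegative). -/
def gowersAvg (s N : ℕ) (f : ℕ → ℂ) : ℂ :=
  (∑ n ∈ PiSet s N, gowersTerm s f n) / (PiSet s N).card

/-- The Gowers uniformity norm `‖f‖_{U^s[N]}`. -/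
def gowersNorm (s N : ℕ) (f : ℕ → ℂ) : ℝ :=
  (gowersAvg s N f).re ^ ((1 : ℝ) / 2 ^ s)

/-- Sum of digits of `n` in base `q`. -/
def digitSum (q n : ℕ) : ℕ := (Nat.digits q n).sum

end

noncomputable section Aux

lemma e_add (x y : ℝ) : e (x + y) = e x * e y := by
  unfold e
  rw [← Complex.exp_add]
  congr 1
  push_cast
  ring

lemma e_int (z : ℤ) : e (z : ℝ) = 1 := by
  unfold e
  have : (2 * Real.pi * Complex.I * ((z : ℝ) : ℂ)) = (z : ℂ) * (2 * Real.pi * Complex.I) := by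
    push_cast; ring
  rw [this, Complex.exp_int_mul_two_pi_mul_I]

lemma e_eq_e_iff {x y : ℝ} : e x = e y ↔ ∃ z : ℤ, x - y = (z : ℝ) := by
  constructor
  · intro h
    have hne : e y ≠ 0 := Complex.exp_ne_zero _
    have h1 : e (x - y) = 1 := by
      have h2 := e_add (x - y) y
      rw [sub_add_cancel, h] at h2
      exact mul_right_cancel₀ hne (by rw [← h2, one_mul])
    unfold e at h1
    rw [Complex.exp_eq_one_iff] at h1
    obtain ⟨n, hn⟩ := h1
    refine ⟨n, ?_⟩
    push_cast at hn
    have h2 : (2 * (Real.pi : ℂ) * Complex.I) * ((x : ℂ) - y) = (2 * (Real.pi : ℂ) * Complex.I) * n := by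
      rw [hn]; ring
    have hnz : (2 * (Real.pi : ℂ) * Complex.I) ≠ 0 := by
      simp [Complex.I_ne_zero, Real.pi_ne_zero]
    have := mul_left_cancel₀ hnz h2
    exact_mod_cast this
  · rintro ⟨z, hz⟩
    have : x = y + z := by linarith
    rw [this, e_add, e_int, mul_one]

lemma exists_e_of_abs_eq_one {z : ℂ} (h : ‖z‖ = 1) : ∃ c : ℝ, z = e c := by
  refine ⟨z.arg / (2 * Real.pi), ?_⟩
  unfold e
  have hpi : ((Real.pi:ℂ)) ≠ 0 := by
    exact_mod_cast Real.pi_ne_zero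
  have harg : (2 * Real.pi * Complex.I * ((z.arg / (2 * Real.pi) : ℝ) : ℂ)) = z.arg * Complex.I := by
    push_cast
    field_simp
  rw [harg]
  have := Complex.norm_mul_exp_arg_mul_I z
  rw [h] at this
  simpa using this.symm

end Aux

noncomputable section Digits

variable {q : ℕ}

/-- digit of `n` at position `t` in base `q`. -/
def dig (q t n : ℕ) : ℕ := n / q ^ t % q

lemma qpow_pos (hq : 2 ≤ q) (t : ℕ) : 0 < q ^ t := Nat.pow_pos (by omega)

lemma dig_eq_mod_div (hq : 2 ≤ q) (t n : ℕ) : dig q t n = n % q ^ (t + 1) / q ^ t := by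
  have h := Nat.mod_pow_succ (x := n) (b := q) (k := t)
  rw [h]
  rw [Nat.add_mul_div_left _ _ (qpow_pos hq t), Nat.div_eq_of_lt (Nat.mod_lt _ (qpow_pos hq t))]
  simp [dig]

lemma dig_congr_mod (hq : 2 ≤ q) {t a b : ℕ} (h : a % q ^ (t + 1) = b % q ^ (t + 1)) :
    dig q t a = dig q t b := by
  rw [dig_eq_mod_div hq, dig_eq_mod_div hq, h]

lemma mod_eq_low_of_dig_zero (hq : 2 ≤ q) {t n : ℕ} (h : dig q t n = 0) :
    n % q ^ (t + 1) = n % q ^ t := by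
  have hh := Nat.mod_pow_succ (x := n) (b := q) (k := t)
  unfold dig at h
  rw [h, Nat.mul_zero, Nat.add_zero] at hh
  exact hh

/-- decomposition lemma: if digit at t is 0 then n = q^(t+1) * c + a with a = n % q^t. -/
lemma decomp_of_dig_zero (hq : 2 ≤ q) {t n : ℕ} (h : dig q t n = 0) :
    n = q ^ (t + 1) * (n / q ^ (t + 1)) + n % q ^ t := by
  conv_lhs => rw [← Nat.div_add_mod n (q ^ (t + 1))]
  rw [mod_eq_low_of_dig_zero hq h]

lemma qmult_step (hq : 2 ≤ q) {f : ℕ → ℂ} (hQ : QMult q f) {t n : ℕ}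
    (h : dig q t n = 0) : f (n + q ^ t) = f (q ^ t) * f n := by
  set a := n % q ^ t with ha
  set c := n / q ^ (t + 1) with hc
  have ha' : a < q ^ t := Nat.mod_lt _ (qpow_pos hq t)
  have hd : n = a + q ^ (t + 1) * c := by
    rw [ha, hc]
    have := decomp_of_dig_zero hq h
    omega
  have h1 : f n = f a * f (q ^ (t + 1) * c) := by
    conv_lhs => rw [hd]
    exact hQ (t + 1) a (q ^ (t + 1) * c) (lt_of_lt_of_le ha' (Nat.pow_le_pow_right (by omega) (by omega))) ⟨c, rfl⟩
  have h2 : n + q ^ t = (a + q ^ t) + q ^ (t + 1) * c := by omega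
  have h3 : f (n + q ^ t) = f (a + q ^ t) * f (q ^ (t + 1) * c) := by
    rw [h2]
    refine hQ (t + 1) (a + q ^ t) (q ^ (t + 1) * c) ?_ ⟨c, rfl⟩
    have : q ^ (t + 1) = q * q ^ t := by ring
    have h2q : 2 * q ^ t ≤ q * q ^ t := Nat.mul_le_mul_right _ (by omega)
    omega
  have h4 : f (a + q ^ t) = f a * f (q ^ t) :=
    hQ t a (q ^ t) ha' ⟨1, by ring⟩
  rw [h3, h4, h1]
  ring

lemma add_pow_lt (hq : 2 ≤ q) {t n L : ℕ} (h : dig q t n = 0) (hn : n < q ^ L) (ht : t < L) :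
    n + q ^ t < q ^ L := by
  have hd0 := decomp_of_dig_zero hq h
  set a := n % q ^ t with ha
  set c := n / q ^ (t + 1) with hc
  have ha' : a < q ^ t := Nat.mod_lt _ (qpow_pos hq t)
  have hd : n = a + q ^ (t + 1) * c := by omega
  have hsplit : q ^ (t + 1) * q ^ (L - t - 1) = q ^ L := by
    rw [← pow_add]; congr 1; omega
  have hcb : c < q ^ (L - t - 1) := by
    rw [hc]
    rw [Nat.div_lt_iff_lt_mul (qpow_pos hq (t + 1))]
    calc n < q ^ L := hn
    _ = q ^ (L - t - 1) * q ^ (t+1) := by rw [← hsplit]; ring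
  have : c + 1 ≤ q ^ (L - t - 1) := hcb
  have h5 : q ^ (t + 1) * (c + 1) ≤ q ^ L := by
    calc q ^ (t + 1) * (c + 1) ≤ q ^ (t + 1) * q ^ (L - t - 1) := Nat.mul_le_mul_left _ this
    _ = q ^ L := hsplit
  have h6 : a + q ^ t < q ^ (t + 1) := by
    have : q ^ (t + 1) = q * q ^ t := by ring
    have h2q : 2 * q ^ t ≤ q * q ^ t := Nat.mul_le_mul_right _ (by omega)
    omega
  calc n + q ^ t = q ^ (t + 1) * c + (a + q ^ t) := by omega
  _ < q ^ (t + 1) * c + q ^ (t + 1) := by omega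
  _ = q ^ (t + 1) * (c + 1) := by ring
  _ ≤ q ^ L := h5

lemma div_add_pow (hq : 2 ≤ q) {t n : ℕ} (h : dig q t n = 0) :
    (n + q ^ t) / q ^ (t + 1) = n / q ^ (t + 1) := by
  have hd0 := decomp_of_dig_zero hq h
  set a := n % q ^ t with ha
  set c := n / q ^ (t + 1) with hc
  have ha' : a < q ^ t := Nat.mod_lt _ (qpow_pos hq t)
  have hd : n = a + q ^ (t + 1) * c := by omega
  have h6 : a + q ^ t < q ^ (t + 1) := by
    have : q ^ (t + 1) = q * q ^ t := by ring
    have h2q : 2 * q ^ t ≤ q * q ^ t := Nat.mul_le_mul_right _ (by omega)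
    omega
  have : n + q ^ t = (a + q ^ t) + q ^ (t + 1) * c := by omega
  rw [this, Nat.add_mul_div_left _ _ (qpow_pos hq (t + 1)), Nat.div_eq_of_lt h6, Nat.zero_add]

lemma dig_add_pow_ne (hq : 2 ≤ q) {t u n : ℕ} (h : dig q t n = 0) (hne : u ≠ t) :
    dig q u (n + q ^ t) = dig q u n := by
  rcases Nat.lt_or_ge u t with hu | hu
  · -- u < t : mod q^(u+1) unchanged
    refine dig_congr_mod hq ?_
    have hdvd : q ^ (u + 1) ∣ q ^ t := pow_dvd_pow q (by omega)
    obtain ⟨d, hd⟩ := hdvd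
    rw [hd, Nat.add_mul_mod_self_left]
  · -- u > t
    have hu' : t + 1 ≤ u := by omega
    have key : (n + q ^ t) / q ^ u = n / q ^ u := by
      have h1 : q ^ u = q ^ (t + 1) * q ^ (u - t - 1) := by rw [← pow_add]; congr 1; omega
      rw [h1, ← Nat.div_div_eq_div_mul, ← Nat.div_div_eq_div_mul, div_add_pow hq h]
    unfold dig
    rw [key]

end Digits

noncomputable section DD

/-- iterated difference with steps `q^t`, `t ∈ ts`. -/
def ddl (q : ℕ) : List ℕ → (ℕ → ℝ) → ℕ → ℝ
  | [], g, n => g n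
  | t :: ts, g, n => ddl q ts g (n + q ^ t) - ddl q ts g n

/-- predicate holds at all vertices of the cube with steps `q^t`. -/
def VertsP (q : ℕ) : List ℕ → ℕ → (ℕ → Prop) → Prop
  | [], n, P => P n
  | t :: ts, n, P => VertsP q ts n P ∧ VertsP q ts (n + q ^ t) P

variable {q : ℕ}

lemma VertsP_mono : ∀ (ts : List ℕ) (n : ℕ) {P Q : ℕ → Prop},
    (∀ v, P v → Q v) → VertsP q ts n P → VertsP q ts n Q := by
  intro ts
  induction ts with
  | nil => intro n P Q h hP; exact h _ hP
  | cons t ts ih =>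
    intro n P Q h hP
    exact ⟨ih n h hP.1, ih _ h hP.2⟩

lemma VertsP_and : ∀ (ts : List ℕ) (n : ℕ) {P Q : ℕ → Prop},
    VertsP q ts n P → VertsP q ts n Q → VertsP q ts n (fun v => P v ∧ Q v) := by
  intro ts
  induction ts with
  | nil => intro n P Q h1 h2; exact ⟨h1, h2⟩
  | cons t ts ih => intro n P Q h1 h2; exact ⟨ih n h1.1 h2.1, ih _ h1.2 h2.2⟩

lemma VertsP_shift : ∀ (ts : List ℕ) (n h : ℕ) {P : ℕ → Prop},
    VertsP q ts (n + h) P ↔ VertsP q ts n (fun v => P (v + h)) := by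
  intro ts
  induction ts with
  | nil => intro n h P; rfl
  | cons t ts ih =>
    intro n h P
    constructor
    · rintro ⟨hp1, hp2⟩
      refine ⟨(ih n h).1 hp1, ?_⟩
      have heq : n + h + q ^ t = (n + q ^ t) + h := by omega
      rw [heq] at hp2
      exact (ih (n + q ^ t) h).1 hp2
    · rintro ⟨hp1, hp2⟩
      refine ⟨(ih n h).2 hp1, ?_⟩
      have heq : (n + q ^ t) + h = n + h + q ^ t := by omega
      have := (ih (n + q ^ t) h).2 hp2
      rwa [heq] at this

lemma ddl_add : ∀ (ts : List ℕ) (F G : ℕ → ℝ) (n : ℕ),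
    ddl q ts (fun v => F v + G v) n = ddl q ts F n + ddl q ts G n := by
  intro ts
  induction ts with
  | nil => intro F G n; rfl
  | cons t ts ih => intro F G n; simp only [ddl, ih]; ring

lemma ddl_const (c : ℝ) : ∀ (ts : List ℕ), ts ≠ [] → ∀ n, ddl q ts (fun _ => c) n = 0 := by
  intro ts
  induction ts with
  | nil => intro h; exact absurd rfl h
  | cons t ts ih =>
    intro _ n
    rcases List.eq_nil_or_concat ts with h | h
    · subst h; simp [ddl]
    · have hne : ts ≠ [] := by rintro rfl; rcases h with ⟨l, a, h⟩; simp at h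
      simp only [ddl, ih hne]; ring

lemma ddl_shift : ∀ (ts : List ℕ) (F : ℕ → ℝ) (n h : ℕ),
    ddl q ts (fun v => F (v + h)) n = ddl q ts F (n + h) := by
  intro ts
  induction ts with
  | nil => intro F n h; rfl
  | cons t ts ih =>
    intro F n h
    simp only [ddl, ih]
    have h1 : n + q ^ t + h = n + h + q ^ t := by omega
    rw [h1]

lemma ddl_int : ∀ (ts : List ℕ) (F : ℕ → ℝ), (∀ v, ∃ z : ℤ, F v = z) → ∀ n, ∃ z : ℤ, ddl q ts F n = z := by
  intro ts
  induction ts with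
  | nil => intro F h n; exact h n
  | cons t ts ih =>
    intro F h n
    obtain ⟨z1, h1⟩ := ih F h (n + q ^ t)
    obtain ⟨z2, h2⟩ := ih F h n
    exact ⟨z1 - z2, by simp [ddl, h1, h2]⟩

lemma ddl_near {a : ℝ} : ∀ (ts : List ℕ) (F : ℕ → ℝ) (n : ℕ),
    VertsP q ts n (fun v => ∃ z : ℤ, |F v - z| ≤ a) →
    ∃ z : ℤ, |ddl q ts F n - z| ≤ 2 ^ ts.length * a := by
  intro ts
  induction ts with
  | nil => intro F n h; simpa [ddl, VertsP] using h
  | cons t ts ih =>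
    intro F n h
    obtain ⟨z1, h1⟩ := ih F (n + q ^ t) h.2
    obtain ⟨z2, h2⟩ := ih F n h.1
    refine ⟨z1 - z2, ?_⟩
    have : ddl q (t :: ts) F n - ((z1 - z2 : ℤ) : ℝ)
        = (ddl q ts F (n + q ^ t) - z1) - (ddl q ts F n - z2) := by
      push_cast [ddl]; ring
    rw [this]
    calc |(ddl q ts F (n + q ^ t) - z1) - (ddl q ts F n - z2)|
        ≤ |ddl q ts F (n + q ^ t) - z1| + |ddl q ts F n - z2| := abs_sub _ _
    _ ≤ 2 ^ ts.length * a + 2 ^ ts.length * a := by gcongr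
    _ = 2 ^ (t :: ts).length * a := by simp [List.length_cons]; ring

/-- sum of q-powers over a list. -/
def sigl (q : ℕ) (l : List ℕ) : ℕ := (l.map (q ^ ·)).sum

lemma sigl_nil : sigl q [] = 0 := rfl
lemma sigl_cons (t : ℕ) (l : List ℕ) : sigl q (t :: l) = q ^ t + sigl q l := by
  simp [sigl]

lemma VertsP_of_sublists : ∀ (ts : List ℕ) (n : ℕ) {P : ℕ → Prop},
    (∀ l : List ℕ, l.Sublist ts → P (n + sigl q l)) → VertsP q ts n P := by
  intro ts
  induction ts with
  | nil => intro n P h; simpa [sigl, VertsP] using h [] (List.Sublist.refl [])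
  | cons t ts ih =>
    intro n P h
    constructor
    · exact ih n fun l hl => h l (hl.cons t)
    · refine ih (n + q ^ t) fun l hl => ?_
      have := h (t :: l) (hl.cons₂ t)
      rw [sigl_cons] at this
      have harr : n + (q ^ t + sigl q l) = n + q ^ t + sigl q l := by omega
      rwa [harr] at this

lemma VertsP_dig (hq : 2 ≤ q) : ∀ (ts : List ℕ) (n : ℕ), ts.Nodup →
    (∀ t ∈ ts, dig q t n = 0) →
    VertsP q ts n (fun v => ∀ u, u ∉ ts → dig q u v = dig q u n) := by
  intro ts
  induction ts with
  | nil => intro n _ _; intro u _; rfl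
  | cons t ts ih =>
    intro n hnd hdg
    have hnd' : ts.Nodup := (List.nodup_cons.mp hnd).2
    have htnot : t ∉ ts := (List.nodup_cons.mp hnd).1
    have hdt : dig q t n = 0 := hdg t List.mem_cons_self
    constructor
    · refine VertsP_mono ts n (fun v hv u hu => hv u ?_) (ih n hnd' fun t' ht' => hdg t' (List.mem_cons_of_mem _ ht'))
      exact fun hmem => hu (List.mem_cons_of_mem _ hmem)
    · have hdig' : ∀ u, u ≠ t → dig q u (n + q ^ t) = dig q u n :=
        fun u hu => dig_add_pow_ne hq hdt hu
      have hts' : ∀ t' ∈ ts, dig q t' (n + q ^ t) = 0 := by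
        intro t' ht'
        rw [hdig' t' (by rintro rfl; exact htnot ht')]
        exact hdg t' (List.mem_cons_of_mem _ ht')
      refine VertsP_mono ts (n + q ^ t) (fun v hv u hu => ?_) (ih (n + q ^ t) hnd' hts')
      have hut : u ≠ t := by rintro rfl; exact hu List.mem_cons_self
      have huts : u ∉ ts := fun hmem => hu (List.mem_cons_of_mem _ hmem)
      rw [hv u huts, hdig' u hut]

end DD

noncomputable section PolyDiff

open Polynomial

/-- the difference polynomial `P(X+h) - P(X)`. -/
def dpoly (h : ℝ) (P : Polynomial ℝ) : Polynomial ℝ := P.comp (X + C h) - P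

lemma hasseDeriv_top (d : ℕ) (P : Polynomial ℝ) (hP : P.natDegree ≤ d) :
    Polynomial.hasseDeriv d P = C (P.coeff d) := by
  ext j
  rw [Polynomial.hasseDeriv_coeff, Polynomial.coeff_C]
  rcases Nat.eq_zero_or_pos j with rfl | hj
  · simp
  · have hne : ¬ j = 0 := by omega
    have hlt : d < j + d := by omega
    rw [Polynomial.coeff_eq_zero_of_natDegree_lt (lt_of_le_of_lt hP hlt), if_neg hne]
    simp

lemma hasseDeriv_gt (d i : ℕ) (P : Polynomial ℝ) (hP : P.natDegree ≤ d) (hi : d < i) :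
    Polynomial.hasseDeriv i P = 0 := by
  ext j
  rw [Polynomial.hasseDeriv_coeff]
  have hlt : d < j + i := by omega
  rw [Polynomial.coeff_eq_zero_of_natDegree_lt (lt_of_le_of_lt hP hlt)]
  simp

lemma hasseDeriv_subtop (d : ℕ) (hd : 1 ≤ d) (P : Polynomial ℝ) (hP : P.natDegree ≤ d) :
    Polynomial.hasseDeriv (d - 1) P = C (P.coeff (d - 1)) + C ((d : ℝ) * P.coeff d) * X := by
  ext j
  rw [Polynomial.hasseDeriv_coeff]
  rw [Polynomial.coeff_add, Polynomial.coeff_C, Polynomial.coeff_C_mul, Polynomial.coeff_X]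
  match j with
  | 0 => simp [Nat.choose_self]
  | 1 =>
    have h1 : 1 + (d - 1) = d := by omega
    rw [h1]
    have h2 : d.choose (d - 1) = d := by
      have h3 := Nat.choose_succ_self_right (d - 1)
      rw [(by omega : d - 1 + 1 = d)] at h3
      exact h3
    rw [h2]
    simp
  | (j + 2) =>
    have hlt : d < j + 2 + (d - 1) := by omega
    rw [Polynomial.coeff_eq_zero_of_natDegree_lt (lt_of_le_of_lt hP hlt)]
    have hne0 : ¬ (j + 2 = 0) := by omega
    rw [if_neg hne0]
    simp

lemma dpoly_coeff (h : ℝ) (d : ℕ) (hd : 1 ≤ d) (P : Polynomial ℝ) (hP : P.natDegree ≤ d) :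
    (dpoly h P).natDegree ≤ d - 1 ∧ (dpoly h P).coeff (d - 1) = (d : ℝ) * h * P.coeff d := by
  have hco : ∀ i, (dpoly h P).coeff i = (Polynomial.hasseDeriv i P).eval h - P.coeff i := by
    intro i
    unfold dpoly
    rw [← Polynomial.taylor_apply, Polynomial.coeff_sub, Polynomial.taylor_coeff]
  constructor
  · rw [Polynomial.natDegree_le_iff_coeff_eq_zero]
    intro N hN
    rw [hco]
    rcases Nat.lt_or_ge d N with hdN | hdN
    · rw [hasseDeriv_gt d N P hP hdN,
        Polynomial.coeff_eq_zero_of_natDegree_lt (lt_of_le_of_lt hP hdN)]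
      simp
    · have hNd : N = d := by omega
      rw [hNd, hasseDeriv_top d P hP]
      simp
  · rw [hco, hasseDeriv_subtop d hd P hP]
    simp
    ring

/-- iterated difference polynomial, steps `q^t`. -/
def ddpoly (q : ℕ) : List ℕ → Polynomial ℝ → Polynomial ℝ
  | [], P => P
  | t :: ts, P => dpoly ((q : ℝ) ^ t) (ddpoly q ts P)

lemma ddpoly_nil (q : ℕ) (P : Polynomial ℝ) : ddpoly q [] P = P := rfl
lemma ddpoly_cons (q t : ℕ) (ts : List ℕ) (P : Polynomial ℝ) :
    ddpoly q (t :: ts) P = dpoly ((q : ℝ) ^ t) (ddpoly q ts P) := rfl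
lemma ddl_cons (q t : ℕ) (ts : List ℕ) (g : ℕ → ℝ) (n : ℕ) :
    ddl q (t :: ts) g n = ddl q ts g (n + q ^ t) - ddl q ts g n := rfl

variable {q : ℕ}

lemma ddl_eval (P : Polynomial ℝ) : ∀ (ts : List ℕ) (n : ℕ),
    ddl q ts (fun v => P.eval (v : ℝ)) n = (ddpoly q ts P).eval (n : ℝ) := by
  intro ts
  induction ts with
  | nil => intro n; rfl
  | cons t ts ih =>
    intro n
    rw [ddl_cons, ih, ih, ddpoly_cons]
    unfold dpoly
    rw [Polynomial.eval_sub, Polynomial.eval_comp]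
    push_cast
    simp

lemma ddpoly_deg_coeff : ∀ (ts : List ℕ) (P : Polynomial ℝ) (d : ℕ),
    ts.length ≤ d → P.natDegree ≤ d →
    (ddpoly q ts P).natDegree ≤ d - ts.length ∧
    (ddpoly q ts P).coeff (d - ts.length)
      = P.coeff d * (d.descFactorial ts.length : ℝ) * (q : ℝ) ^ (ts.sum) := by
  intro ts
  induction ts with
  | nil =>
    intro P d _ hP
    refine ⟨by rw [ddpoly_nil]; simpa using hP, by rw [ddpoly_nil]; simp⟩
  | cons t ts ih =>
    intro P d hlen hP
    have hlen' : ts.length ≤ d := by simp at hlen; omega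
    obtain ⟨h1, h2⟩ := ih P d hlen' hP
    have hd1 : 1 ≤ d - ts.length := by simp at hlen; omega
    obtain ⟨h3, h4⟩ := dpoly_coeff ((q:ℝ)^t) (d - ts.length) hd1 (ddpoly q ts P) h1
    rw [ddpoly_cons]
    have heq : d - (t :: ts).length = d - ts.length - 1 := by simp; omega
    constructor
    · rw [heq]; exact h3
    · rw [heq, h4, h2]
      have hdf : d.descFactorial (ts.length + 1) = (d - ts.length) * d.descFactorial ts.length :=
        Nat.descFactorial_succ d ts.length
      have hsum : (t :: ts).sum = t + ts.sum := by simp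
      simp only [List.length_cons, hdf, hsum]
      push_cast [pow_add]
      ring

lemma ddl_poly_value (ts : List ℕ) (P : Polynomial ℝ) (k : ℕ)
    (hlen : ts.length = k) (hP : P.natDegree ≤ k) (n : ℕ) :
    ddl q ts (fun v => P.eval (v : ℝ)) n
      = P.coeff k * (k.factorial : ℝ) * (q : ℝ) ^ (ts.sum) := by
  obtain ⟨h1, h2⟩ := ddpoly_deg_coeff (q := q) ts P k (le_of_eq hlen) hP
  rw [hlen] at h1 h2
  rw [Nat.sub_self] at h1 h2
  rw [Nat.descFactorial_self] at h2
  rw [ddl_eval, Polynomial.eq_C_of_natDegree_le_zero h1, Polynomial.eval_C, h2]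

end PolyDiff

noncomputable section Counting

variable {q : ℕ}

/-- insert a zero digit at position `t`. -/
def insd (q t w : ℕ) : ℕ := w % q ^ t + q ^ (t + 1) * (w / q ^ t)

lemma insd_div (hq : 2 ≤ q) (t w : ℕ) : insd q t w / q ^ (t + 1) = w / q ^ t := by
  unfold insd
  rw [Nat.add_mul_div_left _ _ (qpow_pos hq (t + 1))]
  rw [Nat.div_eq_of_lt (lt_of_lt_of_le (Nat.mod_lt _ (qpow_pos hq t))
    (Nat.pow_le_pow_right (by omega) (by omega)))]
  omega

lemma insd_mod (hq : 2 ≤ q) (t w : ℕ) : insd q t w % q ^ (t + 1) = w % q ^ t := by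
  unfold insd
  rw [Nat.add_mul_mod_self_left]
  exact Nat.mod_eq_of_lt (lt_of_lt_of_le (Nat.mod_lt _ (qpow_pos hq t))
    (Nat.pow_le_pow_right (by omega) (by omega)))

lemma insd_inj (hq : 2 ≤ q) (t : ℕ) {w w' : ℕ} (h : insd q t w = insd q t w') : w = w' := by
  have h1 : w / q ^ t = w' / q ^ t := by
    rw [← insd_div hq t w, ← insd_div hq t w', h]
  have h2 : w % q ^ t = w' % q ^ t := by
    rw [← insd_mod hq t w, ← insd_mod hq t w', h]
  have e1 := Nat.div_add_mod w (q ^ t)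
  have e2 := Nat.div_add_mod w' (q ^ t)
  have h3 : q ^ t * (w / q ^ t) = q ^ t * (w' / q ^ t) := by rw [h1]
  omega

lemma insd_dig_self (hq : 2 ≤ q) (t w : ℕ) : dig q t (insd q t w) = 0 := by
  rw [dig_eq_mod_div hq, insd_mod hq]
  rw [Nat.div_eq_of_lt (Nat.mod_lt _ (qpow_pos hq t))]

lemma insd_dig_low (hq : 2 ≤ q) {u t : ℕ} (hu : u < t) (w : ℕ) :
    dig q u (insd q t w) = dig q u w := by
  refine dig_congr_mod hq ?_
  have h2 : q ^ (u + 1) ∣ q ^ t := pow_dvd_pow q (by omega)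
  obtain ⟨d1, hd1⟩ : q ^ (u + 1) ∣ q ^ (t + 1) := pow_dvd_pow q (by omega)
  calc insd q t w % q ^ (u + 1)
      = (w % q ^ t + q ^ (u + 1) * (d1 * (w / q ^ t))) % q ^ (u + 1) := by
        unfold insd; rw [hd1, Nat.mul_assoc]
  _ = w % q ^ t % q ^ (u + 1) := Nat.add_mul_mod_self_left _ _ _
  _ = w % q ^ (u + 1) := Nat.mod_mod_of_dvd _ h2

lemma insd_lt (hq : 2 ≤ q) {t w j : ℕ} (hw : w < q ^ j) (ht : t ≤ j) :
    insd q t w < q ^ (j + 1) := by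
  have h1 : w / q ^ t < q ^ (j - t) := by
    rw [Nat.div_lt_iff_lt_mul (qpow_pos hq t)]
    calc w < q ^ j := hw
    _ = q ^ (j - t) * q ^ t := by rw [← pow_add]; congr 1; omega
  have h2 : w / q ^ t + 1 ≤ q ^ (j - t) := h1
  have h3 : q ^ (t + 1) * (w / q ^ t + 1) ≤ q ^ (t + 1) * q ^ (j - t) := Nat.mul_le_mul_left _ h2
  have h4 : q ^ (t + 1) * q ^ (j - t) = q ^ (j + 1) := by rw [← pow_add]; congr 1; omega
  have h5 : w % q ^ t < q ^ t := Nat.mod_lt _ (qpow_pos hq t)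
  have h6 : q ^ t ≤ q ^ (t + 1) := Nat.pow_le_pow_right (by omega) (by omega)
  have hmul : q ^ (t+1) * (w / q ^ t + 1) = q ^ (t+1) * (w / q ^ t) + q ^ (t+1) := by ring
  unfold insd
  omega

/-- insert zero digits at all positions in `ts` (increasing order). -/
def psi (q : ℕ) : List ℕ → ℕ → ℕ
  | [], w => w
  | t :: ts, w => psi q ts (insd q t w)

lemma psi_inj (hq : 2 ≤ q) : ∀ (ts : List ℕ) {w w' : ℕ}, psi q ts w = psi q ts w' → w = w' := by
  intro ts
  induction ts with
  | nil => intro w w' h; exact h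
  | cons t ts ih => intro w w' h; exact insd_inj hq t (ih h)

lemma psi_dig_low (hq : 2 ≤ q) : ∀ (ts : List ℕ) (w u : ℕ), (∀ t' ∈ ts, u < t') →
    dig q u (psi q ts w) = dig q u w := by
  intro ts
  induction ts with
  | nil => intro w u _; rfl
  | cons t ts ih =>
    intro w u hu
    show dig q u (psi q ts (insd q t w)) = _
    rw [ih (insd q t w) u (fun t' ht' => hu t' (List.mem_cons_of_mem _ ht'))]
    exact insd_dig_low hq (hu t List.mem_cons_self) w

lemma list_len_le (a b : ℕ) : ∀ (l : List ℕ), l.Pairwise (· < ·) →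
    (∀ u ∈ l, a < u ∧ u ≤ b) → l.length ≤ b - a := by
  intro l hl hmem
  rcases l with _ | ⟨x, xs⟩
  · simp
  · have hnd : (x :: xs).Nodup := hl.imp (fun h => Nat.ne_of_lt h)
    have hsub : (x :: xs).toFinset ⊆ Finset.Icc (a + 1) b := by
      intro u hu
      rw [List.mem_toFinset] at hu
      have := hmem u hu
      rw [Finset.mem_Icc]
      omega
    have hcard := Finset.card_le_card hsub
    rw [List.toFinset_card_of_nodup hnd, Nat.card_Icc] at hcard
    omega

lemma psi_props (hq : 2 ≤ q) (Lmax : ℕ) : ∀ (ts : List ℕ), ts.Pairwise (· < ·) →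
    (∀ t ∈ ts, t ≤ Lmax) → ∀ w, w < q ^ (Lmax + 1 - ts.length) →
    psi q ts w < q ^ (Lmax + 1) ∧ (∀ t ∈ ts, dig q t (psi q ts w) = 0) := by
  intro ts
  induction ts with
  | nil => intro _ _ w hw; exact ⟨by simpa [psi] using hw, by simp⟩
  | cons t ts ih =>
    intro hsort hmem w hw
    have hts_gt : ∀ u ∈ ts, t < u := fun u hu => (List.pairwise_cons.mp hsort).1 u hu
    have hts_sort : ts.Pairwise (· < ·) := (List.pairwise_cons.mp hsort).2
    have hlen : ts.length ≤ Lmax - t :=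
      list_len_le t Lmax ts hts_sort (fun u hu => ⟨hts_gt u hu, hmem u (List.mem_cons_of_mem _ hu)⟩)
    have htL : t ≤ Lmax := hmem t List.mem_cons_self
    have hj : t ≤ Lmax + 1 - (t :: ts).length := by simp; omega
    have hw' : insd q t w < q ^ (Lmax + 1 - ts.length) := by
      have h1 := insd_lt hq hw hj
      have : Lmax + 1 - (t :: ts).length + 1 ≤ Lmax + 1 - ts.length := by simp; omega
      exact lt_of_lt_of_le h1 (Nat.pow_le_pow_right (by omega) this)
    obtain ⟨hb, hd⟩ := ih hts_sort (fun u hu => hmem u (List.mem_cons_of_mem _ hu)) (insd q t w) hw'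
    refine ⟨hb, ?_⟩
    intro u hu
    rcases List.mem_cons.mp hu with rfl | hu'
    · show dig q u (psi q ts (insd q u w)) = 0
      rw [psi_dig_low hq ts _ u hts_gt]
      exact insd_dig_self hq u w
    · exact hd u hu'

lemma add_sigl_lt (hq : 2 ≤ q) (L : ℕ) : ∀ (l : List ℕ) (n : ℕ), l.Pairwise (· < ·) →
    (∀ t ∈ l, t < L ∧ dig q t n = 0) → n < q ^ L → n + sigl q l < q ^ L := by
  intro l
  induction l with
  | nil => intro n _ _ h; simpa [sigl] using h
  | cons t l ih =>
    intro n hsort hmem hn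
    have ht := hmem t List.mem_cons_self
    have h1 : n + q ^ t < q ^ L := add_pow_lt hq ht.2 hn ht.1
    rw [sigl_cons, ← Nat.add_assoc]
    refine ih (n + q ^ t) (List.pairwise_cons.mp hsort).2 ?_ h1
    intro u hu
    have hlt : t < u := (List.pairwise_cons.mp hsort).1 u hu
    have := hmem u (List.mem_cons_of_mem _ hu)
    exact ⟨this.1, by rw [dig_add_pow_ne hq ht.2 (by omega : u ≠ t)]; exact this.2⟩

lemma good_config (hq : 2 ≤ q) (L : ℕ) (hL : 1 ≤ L) (bad : Finset ℕ) (δ : ℝ) (hδ : 0 ≤ δ)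
    (hbad : (bad.card : ℝ) ≤ δ * (q : ℝ) ^ L) (ts : List ℕ) (k : ℕ) (hlen : ts.length = k)
    (hsort : ts.Pairwise (· < ·)) (hmem : ∀ t ∈ ts, t ≤ L - 1) (hkL : k ≤ L)
    (hsmall : δ * ((2 * q : ℕ) : ℝ) ^ k < 1) :
    ∃ n : ℕ, (∀ t ∈ ts, dig q t n = 0) ∧ VertsP q ts n (fun v => v < q ^ L ∧ v ∉ bad) := by
  classical
  set W := q ^ (L - k) with hW
  set Bset := Finset.range W with hBset
  have hLk : (L - 1) + 1 - ts.length = L - k := by rw [hlen]; omega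
  -- ψ properties
  have hpsi : ∀ w ∈ Bset, psi q ts w < q ^ L ∧ ∀ t ∈ ts, dig q t (psi q ts w) = 0 := by
    intro w hw
    rw [hBset, Finset.mem_range, hW, ← hLk] at hw
    have := psi_props hq (L - 1) ts hsort hmem w hw
    rwa [(by omega : (L - 1) + 1 = L)] at this
  -- vertex bound
  have hvert : ∀ w ∈ Bset, ∀ l : List ℕ, l.Sublist ts → psi q ts w + sigl q l < q ^ L := by
    intro w hw l hl
    obtain ⟨h1, h2⟩ := hpsi w hw
    refine add_sigl_lt hq L l (psi q ts w) (hsort.sublist hl) ?_ h1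
    intro t htl
    have hts : t ∈ ts := hl.mem htl
    exact ⟨by have := hmem t hts; omega, h2 t hts⟩
  -- the bad union
  set SL : Finset (List ℕ) := ts.sublists.toFinset with hSL
  have hnd : ts.Nodup := hsort.imp (fun h => Nat.ne_of_lt h)
  have hSLcard : SL.card = 2 ^ k := by
    rw [hSL, List.toFinset_card_of_nodup (List.nodup_sublists.mpr hnd), List.length_sublists, hlen]
  set U := SL.biUnion (fun l => Bset.filter (fun w => psi q ts w + sigl q l ∈ bad)) with hU
  have hcardU : U.card ≤ 2 ^ k * bad.card := by
    calc U.card ≤ ∑ l ∈ SL, (Bset.filter (fun w => psi q ts w + sigl q l ∈ bad)).card :=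
      Finset.card_biUnion_le
    _ ≤ ∑ _l ∈ SL, bad.card := by
        refine Finset.sum_le_sum ?_
        intro l _
        refine Finset.card_le_card_of_injOn (fun w => psi q ts w + sigl q l) ?_ ?_
        · intro w hw
          exact (Finset.mem_filter.mp hw).2
        · intro w1 _ w2 _ hww
          exact psi_inj hq ts (Nat.add_right_cancel hww)
    _ = 2 ^ k * bad.card := by rw [Finset.sum_const, hSLcard, smul_eq_mul]
  have hqpos : (0:ℝ) < (q:ℝ) := by positivity
  have hWpos : 0 < W := qpow_pos hq (L - k)
  have hstrict : U.card < Bset.card := by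
    have hcast : ((U.card : ℝ)) ≤ (2:ℝ) ^ k * bad.card := by exact_mod_cast hcardU
    have h2 : (2:ℝ) ^ k * (bad.card : ℝ) ≤ (2:ℝ)^k * (δ * (q:ℝ)^L) := by
      refine mul_le_mul_of_nonneg_left hbad (by positivity)
    have h3 : (2:ℝ)^k * (δ * (q:ℝ)^L) < (q:ℝ) ^ (L - k) := by
      have hqL : (q:ℝ) ^ L = (q:ℝ)^k * (q:ℝ)^(L-k) := by
        rw [← pow_add]; congr 1; omega
      rw [hqL]
      have : (2:ℝ)^k * (δ * ((q:ℝ)^k * (q:ℝ)^(L-k))) = (δ * ((2*q:ℕ):ℝ)^k) * (q:ℝ)^(L-k) := by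
        push_cast
        rw [mul_pow]
        ring
      rw [this]
      have hpow : (0:ℝ) < (q:ℝ)^(L-k) := by positivity
      calc (δ * ((2*q:ℕ):ℝ)^k) * (q:ℝ)^(L-k) < 1 * (q:ℝ)^(L-k) := by
            exact mul_lt_mul_of_pos_right hsmall hpow
      _ = (q:ℝ)^(L-k) := by ring
    have hWcast : ((Bset.card : ℕ) : ℝ) = (q:ℝ)^(L-k) := by
      rw [hBset, Finset.card_range, hW]
      push_cast
      rfl
    have : (U.card : ℝ) < (Bset.card : ℝ) := by
      rw [hWcast]; linarith
    exact_mod_cast this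
  obtain ⟨w, hwB, hwU⟩ : ∃ w ∈ Bset, w ∉ U := by
    by_contra hcon
    push_neg at hcon
    exact absurd (Finset.card_le_card hcon) (by omega)
  refine ⟨psi q ts w, (hpsi w hwB).2, ?_⟩
  refine VertsP_of_sublists ts (psi q ts w) ?_
  intro l hl
  refine ⟨hvert w hwB l hl, ?_⟩
  intro hmembad
  refine hwU ?_
  rw [hU, Finset.mem_biUnion]
  exact ⟨l, by rw [hSL, List.mem_toFinset, List.mem_sublists]; exact hl,
    Finset.mem_filter.mpr ⟨hwB, hmembad⟩⟩

end Counting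

noncomputable section Tuples

/-- minimal sum of k distinct scales starting at M. -/
def Amin : ℕ → ℕ → ℕ
  | 0, _ => 0
  | k + 1, M => M + Amin k (M + 1)

/-- maximal sum of k distinct scales bounded by L. -/
def Bmax : ℕ → ℕ → ℕ
  | 0, _ => 0
  | k + 1, L => L + Bmax k (L - 1)

lemma Amin_mono : ∀ (k M M' : ℕ), M ≤ M' → Amin k M ≤ Amin k M' := by
  intro k
  induction k with
  | zero => intro M M' _; rfl
  | succ k ih => intro M M' h; show M + _ ≤ M' + _; exact Nat.add_le_add h (ih _ _ (by omega))

lemma Amin_shift : ∀ (k M : ℕ), Amin k (M + 1) = Amin k M + k := by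
  intro k
  induction k with
  | zero => intro M; rfl
  | succ k ih => intro M; show (M+1) + Amin k (M+2) = (M + Amin k (M+1)) + (k+1);
                 rw [ih (M+1)]; omega

lemma Amin_ge (k M : ℕ) : k ≥ 1 → M ≤ Amin k M := by
  intro hk
  match k, hk with
  | k + 1, _ => show M ≤ M + _ ; omega

lemma Amin_le (k M : ℕ) : Amin k M ≤ k * M + k * k := by
  induction k generalizing M with
  | zero => simp [Amin]
  | succ k ih =>
    show M + Amin k (M + 1) ≤ _
    have := ih (M + 1)
    have e1 : k * (M + 1) = k * M + k := by ring
    have e2 : (k+1) * M = k * M + M := by ring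
    have e3 : (k+1) * (k+1) = k * k + 2*k + 1 := by ring
    omega

lemma Bmax_shift : ∀ (k L : ℕ), k ≤ L → Bmax k L = Bmax k (L - 1) + k := by
  intro k
  induction k with
  | zero => intro L _; rfl
  | succ k ih =>
    intro L hL
    show L + Bmax k (L-1) = ((L-1) + Bmax k (L-1-1)) + (k+1)
    rw [ih (L-1) (by omega)]
    have : L - 1 - 1 = L - 2 := by omega
    omega

lemma AB_eq : ∀ (k L : ℕ), k ≤ L + 1 → Amin k (L + 1 - k) = Bmax k L := by
  intro k
  induction k with
  | zero => intro L _; rfl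
  | succ k ih =>
    intro L hk
    rcases Nat.eq_zero_or_pos L with rfl | hL
    · have hk0 : k = 0 := by omega
      subst hk0; rfl
    · show (L + 1 - (k+1)) + Amin k (L + 1 - (k+1) + 1) = L + Bmax k (L - 1)
      have h1 : k ≤ (L - 1) + 1 := by omega
      rw [← ih (L-1) h1]
      have h2 : L - 1 + 1 - k = L - k := by omega
      rw [h2]
      have h3 : L + 1 - (k + 1) = L - k := by omega
      rw [h3, Amin_shift]
      omega

lemma Bmax_lower : ∀ (k L : ℕ), k ≤ L → k * L ≤ Bmax k (L - 1) + 2 * (k * k) := by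
  intro k
  induction k with
  | zero => intro L _; simp
  | succ k ih =>
    intro L hL
    obtain ⟨L', rfl⟩ : ∃ L', L = L' + 1 := ⟨L - 1, by omega⟩
    show (k+1) * (L' + 1) ≤ ((L'+1) - 1) + Bmax k ((L'+1) - 1 - 1) + 2 * ((k+1)*(k+1))
    have e0 : (L'+1) - 1 - 1 = L' - 1 := by omega
    have e0' : (L'+1) - 1 = L' := by omega
    rw [e0, e0']
    have e1 : (k+1) * (L'+1) = k * L' + L' + k + 1 := by ring
    have e3 : (k+1)*(k+1) = k * k + 2*k + 1 := by ring
    have e4 : k * L' ≤ Bmax k (L' - 1) + 2 * (k * k) := ih L' (by omega)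
    have e5 : Bmax k (L' - 1) ≤ Bmax k L' + 0 := by
      rcases Nat.eq_zero_or_pos k with rfl | hk
      · have h1 : Bmax 0 (L' - 1) = 0 := rfl
        have h2 : Bmax 0 L' = 0 := rfl
        omega
      · rcases Nat.lt_or_ge L' k with h | h
        · omega
        · have := Bmax_shift k L' (by omega)
          omega
    omega


lemma tuple_exists : ∀ (k M T : ℕ) (Lmax : ℕ), M + k ≤ Lmax + 1 → Amin k M ≤ T → T ≤ Bmax k Lmax →
    ∃ ts : List ℕ, ts.length = k ∧ ts.Pairwise (· < ·) ∧ (∀ t ∈ ts, M ≤ t ∧ t ≤ Lmax) ∧ ts.sum = T := by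
  intro k
  induction k with
  | zero =>
    intro M T Lmax _ h1 h2
    refine ⟨[], rfl, List.Pairwise.nil, by simp, ?_⟩
    show 0 = T
    have : Amin 0 M = 0 := rfl
    have : Bmax 0 Lmax = 0 := rfl
    omega
  | succ k ih =>
    intro M T Lmax hML hA hB
    have hAe : Amin (k+1) M = M + Amin k (M + 1) := rfl
    have hBe : Bmax (k+1) Lmax = Lmax + Bmax k (Lmax - 1) := rfl
    have hkL : k ≤ Lmax := by omega
    have hBs : Bmax k Lmax = Bmax k (Lmax - 1) + k := Bmax_shift k Lmax hkL
    set t1 := max M (T - Bmax k Lmax) with ht1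
    have ht1M : M ≤ t1 := le_max_left _ _
    have ht1T : t1 ≤ T := by
      have h1 : M ≤ Amin (k+1) M := Amin_ge (k+1) M (by omega)
      have h2 : T - Bmax k Lmax ≤ T := by omega
      omega
    have hc1 : t1 + k ≤ Lmax := by
      rcases max_cases M (T - Bmax k Lmax) with ⟨he, hle⟩ | ⟨he, hlt⟩
      · rw [ht1, he]; omega
      · rw [ht1, he]; omega
    have hc2 : Amin k (t1 + 1) ≤ T - t1 := by
      rcases max_cases M (T - Bmax k Lmax) with ⟨he, hle⟩ | ⟨he, hlt⟩
      · rw [ht1, he] at *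
        omega
      · rw [ht1, he] at *
        have hTB : Bmax k Lmax ≤ T := by omega
        have h5 : T - (T - Bmax k Lmax) = Bmax k Lmax := by omega
        rw [h5]
        have h6 : Bmax k Lmax = Amin k (Lmax + 1 - k) := (AB_eq k Lmax (by omega)).symm
        rw [h6]
        refine Amin_mono k _ _ ?_
        omega
    have hc3 : T - t1 ≤ Bmax k Lmax := by
      rcases max_cases M (T - Bmax k Lmax) with ⟨he, hle⟩ | ⟨he, hlt⟩
      · rw [ht1, he] at *; omega
      · rw [ht1, he] at *; omega
    obtain ⟨ts', hl1, hl2, hl3, hl4⟩ := ih (t1 + 1) (T - t1) Lmax (by omega) hc2 hc3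
    refine ⟨t1 :: ts', by simp [hl1], ?_, ?_, ?_⟩
    · rw [List.pairwise_cons]
      exact ⟨fun u hu => by have := (hl3 u hu).1; omega, hl2⟩
    · intro t ht
      rcases List.mem_cons.mp ht with rfl | ht'
      · exact ⟨ht1M, by omega⟩
      · have := hl3 t ht'; omega
    · simp [hl4]; omega

end Tuples

noncomputable section Chain

lemma int_eq_of_abs_lt {z z' : ℤ} (h : |(z : ℝ) - (z' : ℝ)| < 1) : z = z' := by
  have h1 : |((z - z' : ℤ) : ℝ)| < 1 := by push_cast; exact h
  rw [← Int.cast_abs] at h1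
  have h2 : |z - z'| < 1 := by exact_mod_cast h1
  have := Int.abs_lt_one_iff.mp h2
  omega

lemma chain_lemma {q : ℕ} (hq : 2 ≤ q) (x ε' : ℝ) (hε0 : 0 ≤ ε')
    (hε : ((q : ℝ) + 1) * ε' < 1) (A B : ℕ) (hAB : A ≤ B)
    (h : ∀ T, A ≤ T → T ≤ B → ∃ z : ℤ, |x * (q : ℝ) ^ T - z| ≤ ε') :
    ∃ z : ℤ, |x * (q : ℝ) ^ A - z| ≤ ε' ∧ |x * (q : ℝ) ^ B - (z : ℝ) * (q : ℝ) ^ (B - A)| ≤ ε' := by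
  obtain ⟨z0, hz0⟩ := h A le_rfl hAB
  have key : ∀ j, A + j ≤ B → |x * (q : ℝ) ^ (A + j) - (z0 : ℝ) * (q : ℝ) ^ j| ≤ ε' := by
    intro j
    induction j with
    | zero => intro _; simpa using hz0
    | succ j ihj =>
      intro hj
      have hprev := ihj (by omega)
      obtain ⟨z', hz'⟩ := h (A + (j+1)) (by omega) hj
      have hqpos : (0:ℝ) < q := by positivity
      have hstep : |x * (q : ℝ) ^ (A + (j+1)) - (z0 : ℝ) * (q : ℝ) ^ (j+1)| ≤ (q : ℝ) * ε' := by
        have e1 : x * (q : ℝ) ^ (A + (j+1)) - (z0 : ℝ) * (q : ℝ) ^ (j+1)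
            = (q : ℝ) * (x * (q : ℝ) ^ (A + j) - (z0 : ℝ) * (q : ℝ) ^ j) := by
          have ep : (A + (j+1)) = (A + j) + 1 := by omega
          rw [ep, pow_succ, pow_succ]; ring
        rw [e1, abs_mul, abs_of_pos hqpos]
        exact mul_le_mul_of_nonneg_left hprev (le_of_lt hqpos)
      have hdiff : |(z' : ℝ) - (z0 : ℝ) * (q : ℝ) ^ (j+1)| < 1 := by
        have h1 : |(z' : ℝ) - (z0 : ℝ) * (q : ℝ) ^ (j+1)|
            ≤ |(z' : ℝ) - x * (q : ℝ) ^ (A + (j+1))| + |x * (q : ℝ) ^ (A + (j+1)) - (z0 : ℝ) * (q : ℝ) ^ (j+1)| :=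
          abs_sub_le _ _ _
        have h2 : |(z' : ℝ) - x * (q : ℝ) ^ (A + (j+1))| = |x * (q : ℝ) ^ (A + (j+1)) - (z' : ℝ)| :=
          abs_sub_comm _ _
        rw [h2] at h1
        calc |(z' : ℝ) - (z0 : ℝ) * (q : ℝ) ^ (j+1)|
            ≤ |x * (q : ℝ) ^ (A + (j+1)) - z'| + |x * (q : ℝ) ^ (A + (j+1)) - (z0 : ℝ) * (q : ℝ) ^ (j+1)| := h1
        _ ≤ ε' + (q : ℝ) * ε' := by gcongr
        _ = ((q : ℝ) + 1) * ε' := by ring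
        _ < 1 := hε
      have hzz : z' = z0 * (q : ℤ) ^ (j+1) := by
        refine int_eq_of_abs_lt ?_
        push_cast
        exact hdiff
      have : (z' : ℝ) = (z0 : ℝ) * (q : ℝ) ^ (j+1) := by
        rw [hzz]; push_cast; ring
      rw [← this]
      exact hz'
  refine ⟨z0, hz0, ?_⟩
  have := key (B - A) (by omega)
  rwa [(by omega : A + (B - A) = B)] at this

end Chain

noncomputable section Divis

lemma choose_pow_dvd {q : ℕ} (hq : 2 ≤ q) (A s' t r : ℕ) (hr1 : 1 ≤ r) (hrs : r ≤ 2 ^ s')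
    (ht : A + s' ≤ t) : q ^ A ∣ Nat.choose (q ^ t) r := by
  have hqt1 : 1 ≤ q ^ t := Nat.one_le_pow _ _ (by omega)
  have key : r * Nat.choose (q ^ t) r = q ^ t * Nat.choose (q ^ t - 1) (r - 1) := by
    have h := Nat.add_one_mul_choose_eq (q ^ t - 1) (r - 1)
    have e1 : q ^ t - 1 + 1 = q ^ t := by omega
    have e2 : r - 1 + 1 = r := by omega
    rw [e1, e2] at h
    rw [mul_comm]
    exact h.symm
  set g := Nat.gcd r (q ^ s') with hg
  have hgr : g ∣ r := Nat.gcd_dvd_left _ _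
  have hgs : g ∣ q ^ s' := Nat.gcd_dvd_right _ _
  have hgpos : 0 < g := Nat.gcd_pos_of_pos_left _ (by omega)
  have hrg : r = g * (r / g) := (Nat.mul_div_cancel' hgr).symm
  have hcop : Nat.Coprime (r / g) q := by
    by_contra hncop
    have hd : Nat.gcd (r / g) q ≠ 1 := hncop
    obtain ⟨p, hp, hpd⟩ := Nat.exists_prime_and_dvd hd
    have hpr : p ∣ r / g := hpd.trans (Nat.gcd_dvd_left _ _)
    have hpq : p ∣ q := hpd.trans (Nat.gcd_dvd_right _ _)
    set a := r.factorization p with ha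
    have hpa_r : p ^ a ∣ r := Nat.ordProj_dvd r p
    have haS : a ≤ s' := by
      have h1 : p ^ a ≤ r := Nat.le_of_dvd (by omega) hpa_r
      have h2 : 2 ^ a ≤ p ^ a := Nat.pow_le_pow_left hp.two_le a
      have h3 : 2 ^ a ≤ 2 ^ s' := by omega
      exact (Nat.pow_le_pow_iff_right (by omega)).mp h3
    have hpa_q : p ^ a ∣ q ^ s' := by
      calc p ^ a ∣ p ^ s' := pow_dvd_pow p haS
      _ ∣ q ^ s' := pow_dvd_pow_of_dvd hpq s'
    have hpa_g : p ^ a ∣ g := Nat.dvd_gcd hpa_r hpa_q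
    have hpa1 : p ^ (a + 1) ∣ r := by
      rw [hrg]
      rw [pow_succ]
      exact mul_dvd_mul hpa_g hpr
    have := (Nat.Prime.pow_dvd_iff_le_factorization hp (by omega : r ≠ 0)).mp hpa1
    omega
  -- now conclude
  have hgt : g ∣ q ^ t := hgs.trans (pow_dvd_pow q (by omega))
  set c := q ^ t / g with hc
  have hct : q ^ t = g * c := (Nat.mul_div_cancel' hgt).symm
  have hkey2 : (r / g) * Nat.choose (q ^ t) r = c * Nat.choose (q ^ t - 1) (r - 1) := by
    have h2 : g * ((r / g) * Nat.choose (q ^ t) r) = g * (c * Nat.choose (q ^ t - 1) (r - 1)) := by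
      calc g * ((r / g) * Nat.choose (q ^ t) r) = (g * (r / g)) * Nat.choose (q ^ t) r := by ring
      _ = r * Nat.choose (q ^ t) r := by rw [← hrg]
      _ = q ^ t * Nat.choose (q ^ t - 1) (r - 1) := key
      _ = g * (c * Nat.choose (q ^ t - 1) (r - 1)) := by rw [hct]; ring
    exact Nat.eq_of_mul_eq_mul_left hgpos h2
  have hcdvd : c ∣ (r / g) * Nat.choose (q ^ t) r := ⟨Nat.choose (q ^ t - 1) (r - 1), hkey2.symm ▸ rfl⟩
  have hcop2 : Nat.Coprime c (r / g) := by
    have h1 : Nat.Coprime (r / g) (q ^ t) := Nat.Coprime.pow_right t hcop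
    have h2 : Nat.Coprime (r / g) c := Nat.Coprime.coprime_dvd_right ⟨g, by rw [hct]; ring⟩ h1
    exact h2.symm
  have hcC : c ∣ Nat.choose (q ^ t) r := by
    exact (Nat.Coprime.dvd_of_dvd_mul_left hcop2 hcdvd)
  have hqAc : q ^ A ∣ c := by
    have h1 : q ^ A * g ∣ q ^ t := by
      have h2 : q ^ A * g ∣ q ^ A * q ^ s' := mul_dvd_mul_left _ hgs
      have h3 : q ^ A * q ^ s' = q ^ (A + s') := by rw [pow_add]
      have h4 : (q : ℕ) ^ (A + s') ∣ q ^ t := pow_dvd_pow q ht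
      rw [h3] at h2
      exact h2.trans h4
    rw [hc]
    exact (Nat.dvd_div_iff_mul_dvd hgt).mpr (by rwa [mul_comm] at h1)
  exact hqAc.trans hcC

end Divis

noncomputable section BPoly

variable {q : ℕ}

/-- `b` has integer increments for shifts by `q^t`, all `t ≥ M`. -/
def IntShift (q M : ℕ) (b : Polynomial ℚ) : Prop :=
  ∀ t : ℕ, M ≤ t → ∀ n : ℕ, ∃ z : ℤ, b.eval ((n : ℚ) + (q : ℚ) ^ t) - b.eval (n : ℚ) = z

lemma IntShift_zero (M : ℕ) : IntShift q M 0 := by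
  intro t _ n; exact ⟨0, by simp⟩

lemma IntShift_mono {M M' : ℕ} (h : M ≤ M') {b : Polynomial ℚ} (hb : IntShift q M b) :
    IntShift q M' b := fun t ht n => hb t (by omega) n

lemma IntShift_add {M : ℕ} {b₁ b₂ : Polynomial ℚ} (h1 : IntShift q M b₁) (h2 : IntShift q M b₂) :
    IntShift q M (b₁ + b₂) := by
  intro t ht n
  obtain ⟨z1, hz1⟩ := h1 t ht n
  obtain ⟨z2, hz2⟩ := h2 t ht n
  exact ⟨z1 + z2, by simp only [Polynomial.eval_add]; push_cast; linarith⟩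

lemma descFactorial_eq (n k : ℕ) : (n.descFactorial k) = k.factorial * n.choose k := by
  have h1 := Nat.choose_eq_descFactorial_div_factorial n k
  have h2 := Nat.factorial_dvd_descFactorial n k
  obtain ⟨c, hc⟩ := h2
  rw [hc] at h1 ⊢
  rw [Nat.mul_div_cancel_left _ (Nat.factorial_pos k)] at h1
  rw [h1]

/-- the correction polynomial `(z/q^A) * binom(X, k')`. -/
def bqpoly (q : ℕ) (z : ℤ) (A k' : ℕ) : Polynomial ℚ :=
  Polynomial.C ((z : ℚ) / ((q : ℚ) ^ A * (Nat.factorial k' : ℚ))) * descPochhammer ℚ k'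

lemma bqpoly_eval (hq : 2 ≤ q) (z : ℤ) (A k' n : ℕ) :
    (bqpoly q z A k').eval (n : ℚ) = (z : ℚ) * (n.choose k' : ℚ) / (q : ℚ) ^ A := by
  unfold bqpoly
  rw [Polynomial.eval_mul, Polynomial.eval_C, descPochhammer_eval_eq_descFactorial]
  have h := descFactorial_eq n k'
  have hfac : ((Nat.factorial k' : ℚ)) ≠ 0 := by
    exact_mod_cast Nat.factorial_ne_zero k'
  have hqA : ((q : ℚ) ^ A) ≠ 0 := by positivity
  rw [h]
  push_cast
  field_simp

lemma bqpoly_coeff (z : ℤ) (A k' : ℕ) :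
    (bqpoly q z A k').coeff k' = (z : ℚ) / ((q : ℚ) ^ A * (Nat.factorial k' : ℚ)) := by
  unfold bqpoly
  rw [Polynomial.coeff_C_mul]
  have h1 : (descPochhammer ℚ k').coeff k' = 1 := by
    have h2 := (monic_descPochhammer ℚ k')
    have h3 := descPochhammer_natDegree (R := ℚ) k'
    have := h2.coeff_natDegree
    rwa [h3] at this
  rw [h1, mul_one]

lemma bqpoly_natDegree (z : ℤ) (A k' : ℕ) : (bqpoly q z A k').natDegree ≤ k' := by
  unfold bqpoly
  refine le_trans (Polynomial.natDegree_C_mul_le _ _) ?_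
  rw [descPochhammer_natDegree]

lemma choose_add_pow (hq : 2 ≤ q) (A k' t n : ℕ) (hk : 1 ≤ k') (ht : A + k' ≤ t) :
    ∃ D : ℕ, (n + q ^ t).choose k' = n.choose k' + q ^ A * D := by
  have h := Nat.add_choose_eq n (q ^ t) k'
  rw [Finset.Nat.sum_antidiagonal_eq_sum_range_succ_mk, Finset.sum_range_succ] at h
  have hdvd : q ^ A ∣ ∑ i ∈ Finset.range k', n.choose i * (q ^ t).choose (k' - i) := by
    refine Finset.dvd_sum ?_
    intro i hi
    rw [Finset.mem_range] at hi
    have hle : k' - i ≤ 2 ^ k' := by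
      have := Nat.lt_two_pow_self (n := k')
      omega
    exact Dvd.dvd.mul_left (choose_pow_dvd hq A k' t (k' - i) (by omega) hle ht) _
  obtain ⟨D, hD⟩ := hdvd
  refine ⟨D, ?_⟩
  rw [h, hD]
  simp [Nat.sub_self]
  ring

lemma bqpoly_IntShift (hq : 2 ≤ q) (z : ℤ) (A k' : ℕ) (hk : 1 ≤ k') :
    IntShift q (A + k') (bqpoly q z A k') := by
  intro t ht n
  have hcast : ((n : ℚ) + (q : ℚ) ^ t) = ((n + q ^ t : ℕ) : ℚ) := by push_cast; ring
  rw [hcast, bqpoly_eval hq, bqpoly_eval hq]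
  obtain ⟨D, hD⟩ := choose_add_pow hq A k' t n hk (by omega)
  refine ⟨z * D, ?_⟩
  rw [hD]
  have hqA : ((q : ℚ) ^ A) ≠ 0 := by positivity
  push_cast
  field_simp
  ring

end BPoly

noncomputable section Constants

/-- per-level error growth factor. -/
def gamc (q k : ℕ) : ℝ := 1 + 2 ^ k * (q : ℝ) ^ (2 * (k * k))

/-- total error factor. -/
def Phic (q : ℕ) : ℕ → ℝ
  | 0 => 1
  | k + 1 => gamc q (k + 1) * Phic q k

/-- smallness requirement factor. -/
def Wc (q : ℕ) : ℕ → ℝ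
  | 0 => 1
  | k + 1 => 4 * ((q : ℝ) + 1) * 2 ^ (k + 1) * gamc q (k + 1) * Wc q k

/-- bound for the period exponent. -/
def Xic : ℕ → ℕ → ℕ
  | 0, M => M
  | k + 1, M => Xic k ((k + 1) * M + (k + 1) * (k + 1) + (k + 1))

/-- lower bound for L. -/
def Lamc : ℕ → ℕ → ℕ
  | 0, _ => 1
  | k + 1, M => max (M + k + 3) (Lamc k ((k + 1) * M + (k + 1) * (k + 1) + (k + 1)))

variable {q : ℕ}

lemma gamc_ge_one (hq : 2 ≤ q) (k : ℕ) : 1 ≤ gamc q k := by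
  unfold gamc
  have h1 : (0:ℝ) ≤ 2 ^ k * (q : ℝ) ^ (2 * (k * k)) := by positivity
  linarith

lemma Phic_ge_one (hq : 2 ≤ q) : ∀ k, 1 ≤ Phic q k := by
  intro k
  induction k with
  | zero => exact le_refl 1
  | succ k ih =>
    show 1 ≤ gamc q (k+1) * Phic q k
    calc (1:ℝ) = 1 * 1 := by ring
    _ ≤ gamc q (k+1) * Phic q k := by
        exact mul_le_mul (gamc_ge_one hq (k+1)) ih (by norm_num) (by linarith [gamc_ge_one hq (k+1)])

lemma Wc_ge_one (hq : 2 ≤ q) : ∀ k, 1 ≤ Wc q k := by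
  intro k
  induction k with
  | zero => exact le_refl 1
  | succ k ih =>
    show 1 ≤ 4 * ((q : ℝ) + 1) * 2 ^ (k + 1) * gamc q (k + 1) * Wc q k
    have h1 : (1:ℝ) ≤ 4 * ((q : ℝ) + 1) := by
      have : (0:ℝ) ≤ (q:ℝ) := by positivity
      linarith
    have h2 : (1:ℝ) ≤ 2 ^ (k+1) := one_le_pow₀ (by norm_num : (1:ℝ) ≤ 2)
    have h3 := gamc_ge_one hq (k+1)
    have h4 : (1:ℝ) ≤ 4 * ((q : ℝ) + 1) * 2 ^ (k + 1) := by nlinarith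
    have h5 : (1:ℝ) ≤ 4 * ((q : ℝ) + 1) * 2 ^ (k + 1) * gamc q (k + 1) := by nlinarith
    nlinarith

lemma Xic_mono : ∀ (k M M' : ℕ), M ≤ M' → Xic k M ≤ Xic k M' := by
  intro k
  induction k with
  | zero => intro M M' h; exact h
  | succ k ih =>
    intro M M' h
    show Xic k _ ≤ Xic k _
    refine ih _ _ ?_
    have : (k+1) * M ≤ (k+1) * M' := Nat.mul_le_mul_left _ h
    omega

lemma Xic_ge (k M : ℕ) : M ≤ Xic k M := by
  induction k generalizing M with
  | zero => exact le_refl M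
  | succ k ih =>
    show M ≤ Xic k ((k + 1) * M + (k + 1) * (k + 1) + (k + 1))
    refine le_trans ?_ (ih _)
    have : 1 * M ≤ (k+1) * M := Nat.mul_le_mul_right _ (by omega)
    omega

lemma Lamc_mono : ∀ (k M M' : ℕ), M ≤ M' → Lamc k M ≤ Lamc k M' := by
  intro k
  induction k with
  | zero => intro _ _ _; exact le_refl 1
  | succ k ih =>
    intro M M' h
    show max _ _ ≤ max _ _
    have h1 : (k+1) * M ≤ (k+1) * M' := Nat.mul_le_mul_left _ h
    exact max_le_max (by omega) (ih _ _ (by omega))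

lemma Lamc_ge_one : ∀ (k M : ℕ), 1 ≤ Lamc k M := by
  intro k
  induction k with
  | zero => intro _; exact le_refl 1
  | succ k ih => intro M; exact le_trans (by omega : 1 ≤ M + k + 3) (le_max_left _ _)

end Constants

noncomputable section MasterSec

lemma ddl_sub {q : ℕ} : ∀ (ts : List ℕ) (F G : ℕ → ℝ) (n : ℕ),
    ddl q ts (fun v => F v - G v) n = ddl q ts F n - ddl q ts G n := by
  intro ts
  induction ts with
  | nil => intro F G n; rfl
  | cons t ts ih => intro F G n; show ddl q ts _ _ - ddl q ts _ _ = _; rw [ih, ih, ddl_cons, ddl_cons]; ring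

lemma map_eval_nat (b : Polynomial ℚ) (n : ℕ) :
    (b.map (algebraMap ℚ ℝ)).eval ((n : ℕ) : ℝ) = ((b.eval ((n : ℕ) : ℚ) : ℚ) : ℝ) := by
  rw [Polynomial.eval_map, Polynomial.eval₂_at_natCast]
  exact eq_ratCast _ _

lemma map_coeff_rat (b : Polynomial ℚ) (i : ℕ) :
    (b.map (algebraMap ℚ ℝ)).coeff i = ((b.coeff i : ℚ) : ℝ) := by
  rw [Polynomial.coeff_map]
  exact eq_ratCast _ _

set_option maxHeartbeats 2000000 in
theorem master (q : ℕ) (hq : 2 ≤ q) (f : ℕ → ℂ) (hQ : QMult q f)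
    (hf : ∀ n, ‖f n‖ = 1) (ε δ : ℝ) (hε : 0 < ε) (hδ : 0 ≤ δ)
    (L : ℕ) (bad : Finset ℕ) (hbad : (bad.card : ℝ) ≤ δ * (q : ℝ) ^ L) :
    ∀ (k M : ℕ) (K : ℝ) (P : Polynomial ℝ) (b₀ : Polynomial ℚ),
      1 ≤ M → 1 ≤ K → δ * ((2 * q : ℕ) : ℝ) ^ k < 1 → Lamc k M ≤ L →
      ε * (K * Wc q k) ≤ 1 → P.natDegree ≤ k → IntShift q M b₀ →
      (∀ n : ℕ, n < q ^ L → n ∉ bad →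
        ∃ θ : ℝ, |θ| ≤ K * ε ∧ f n = e (P.eval (n : ℝ) + ((b₀.eval (n : ℚ) : ℚ) : ℝ) + θ)) →
      ∃ α β : ℝ, ∃ b : Polynomial ℚ, ∃ m : ℕ, m ≤ Xic k M ∧
        (∀ n : ℕ, ∃ z : ℤ, b.eval ((n : ℚ) + (q : ℚ) ^ m) - b.eval (n : ℚ) = z) ∧
        (∀ n : ℕ, n < q ^ L → n ∉ bad →
          ∃ θ : ℝ, |θ| ≤ Phic q k * K * ε ∧
            f n = e (α * n + β + ((b.eval (n : ℚ) : ℚ) : ℝ) + θ)) := by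
  intro k
  induction k with
  | zero =>
    intro M K P b₀ hM hK hsmall hLam hW hP hb₀ happ
    refine ⟨0, P.coeff 0, b₀, M, le_refl _, fun n => hb₀ M le_rfl n, ?_⟩
    intro n hn hnb
    obtain ⟨θ, hθ, hfeq⟩ := happ n hn hnb
    refine ⟨θ, ?_, ?_⟩
    · have h1 : Phic q 0 = 1 := rfl
      rw [h1, one_mul]
      exact hθ
    · rw [hfeq]
      congr 1
      have hPeval : P.eval ((n : ℕ) : ℝ) = P.coeff 0 := by
        conv_lhs => rw [Polynomial.eq_C_of_natDegree_le_zero hP]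
        rw [Polynomial.eval_C]
      rw [hPeval]
      ring
  | succ k ih =>
    intro M K P b₀ hM hK hsmall hLam hW hP hb₀ happ
    have hL1 : 1 ≤ L := le_trans (Lamc_ge_one (k+1) M) hLam
    rcases Nat.eq_zero_or_pos k with rfl | hk1
    · -- linear case
      refine ⟨P.coeff 1, P.coeff 0, b₀, M, Xic_ge _ _, fun n => hb₀ M le_rfl n, ?_⟩
      intro n hn hnb
      obtain ⟨θ, hθ, hfeq⟩ := happ n hn hnb
      refine ⟨θ, ?_, ?_⟩
      · have h1 : Phic q 1 = gamc q 1 * Phic q 0 := rfl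
        have h2 : Phic q 0 = 1 := rfl
        have h3 := gamc_ge_one hq 1
        have h4 : (0:ℝ) < K * ε := by positivity
        rw [h1, h2]
        nlinarith
      · rw [hfeq]
        congr 1
        have hPeval : P.eval ((n : ℕ) : ℝ) = P.coeff 1 * (n : ℝ) + P.coeff 0 := by
          conv_lhs => rw [Polynomial.eq_X_add_C_of_natDegree_le_one hP]
          simp
        rw [hPeval]
    · -- main inductive step, k ≥ 1, degree k+1 ≥ 2
      have hLM : M + k + 3 ≤ L := le_trans (le_max_left _ _) hLam
      set A := Amin (k+1) M with hA
      set B := Bmax (k+1) (L - 1) with hB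
      set ε' := 2 ^ (k+1) * (K * ε) with hε'
      have hε'pos : 0 < ε' := by rw [hε']; positivity
      set x := P.coeff (k+1) * ((Nat.factorial (k+1) : ℕ) : ℝ) with hx
      have HT : ∀ T, A ≤ T → T ≤ B → ∃ z : ℤ, |x * (q : ℝ) ^ T - z| ≤ ε' := by
        intro T hTA hTB
        obtain ⟨ts, hlen, hsort, hmemts, hsum⟩ :=
          tuple_exists (k+1) M T (L - 1) (by omega) (by rw [← hA]; exact hTA) (by rw [← hB]; exact hTB)
        obtain ⟨n, hdig, hgood⟩ := good_config hq L hL1 bad δ hδ hbad ts (k+1) hlen hsort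
          (fun t ht => (hmemts t ht).2) (by omega) hsmall
        rcases ts with _ | ⟨t₁, ts'⟩
        · simp at hlen
        have hlen' : ts'.length = k := by simpa using hlen
        have hts'ne : ts' ≠ [] := by
          intro hcon; rw [hcon] at hlen'; simp at hlen'; omega
        have hsort' : ts'.Pairwise (· < ·) := (List.pairwise_cons.mp hsort).2
        have hhead : ∀ u ∈ ts', t₁ < u := (List.pairwise_cons.mp hsort).1
        have ht₁M : M ≤ t₁ := (hmemts t₁ List.mem_cons_self).1
        have hnd' : ts'.Nodup := hsort'.imp (fun h => Nat.ne_of_lt h)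
        have ht₁nmem : t₁ ∉ ts' := fun hmem => lt_irrefl t₁ (hhead t₁ hmem)
        set g : ℕ → ℝ := fun v => P.eval (v : ℝ) + ((b₀.eval ((v : ℕ) : ℚ) : ℚ) : ℝ) with hg
        obtain ⟨c, hc⟩ := exists_e_of_abs_eq_one (hf (q ^ t₁))
        set F : ℕ → ℝ := fun v => g (v + q ^ t₁) - g v - c with hF
        obtain ⟨hg1, hg2⟩ := hgood
        have hg2' : VertsP q ts' n (fun v => (v + q ^ t₁ < q ^ L ∧ v + q ^ t₁ ∉ bad)) :=
          (VertsP_shift ts' n (q ^ t₁)).mp hg2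
        have hdigV : VertsP q ts' n (fun v => dig q t₁ v = 0) := by
          have h0 := VertsP_dig hq ts' n hnd'
            (fun t' ht' => hdig t' (List.mem_cons_of_mem _ ht'))
          refine VertsP_mono ts' n ?_ h0
          intro v hv
          rw [hv t₁ ht₁nmem]
          exact hdig t₁ List.mem_cons_self
        have hNear : VertsP q ts' n (fun v => ∃ z : ℤ, |F v - z| ≤ 2 * (K * ε)) := by
          have hAll := VertsP_and ts' n (VertsP_and ts' n hg1 hg2') hdigV
          refine VertsP_mono ts' n ?_ hAll
          rintro v ⟨⟨⟨hv1, hv2⟩, ⟨hw1, hw2⟩⟩, hdv⟩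
          obtain ⟨θv, hθv, hfv⟩ := happ v hv1 hv2
          obtain ⟨θw, hθw, hfw⟩ := happ (v + q ^ t₁) hw1 hw2
          have hmul : f (v + q ^ t₁) = f (q ^ t₁) * f v := qmult_step hq hQ hdv
          have heq : e (g (v + q ^ t₁) + θw) = e (c + (g v + θv)) := by
            show e ((P.eval (((v + q ^ t₁ : ℕ)) : ℝ) + ((b₀.eval (((v + q ^ t₁ : ℕ)) : ℚ) : ℚ) : ℝ)) + θw)
                = e (c + ((P.eval ((v : ℕ) : ℝ) + ((b₀.eval ((v : ℕ) : ℚ) : ℚ) : ℝ)) + θv))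
            rw [e_add c, ← hc, ← hfv, ← hmul, hfw]
          obtain ⟨z, hz⟩ := e_eq_e_iff.mp heq
          refine ⟨z, ?_⟩
          have hFv : F v - z = θv - θw := by
            rw [hF]
            simp only
            linarith [hz]
          rw [hFv]
          calc |θv - θw| ≤ |θv| + |θw| := abs_sub _ _
          _ ≤ K * ε + K * ε := by gcongr
          _ = 2 * (K * ε) := by ring
        obtain ⟨z₁, hz₁⟩ := ddl_near ts' F n hNear
        have e1 : ddl q ts' F n = ddl q (t₁ :: ts') g n := by
          have s1 : ddl q ts' F n
              = ddl q ts' (fun v => g (v + q ^ t₁) - g v) n - ddl q ts' (fun _ => c) n :=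
            ddl_sub ts' _ _ n
          rw [ddl_const c ts' hts'ne n, sub_zero] at s1
          rw [s1, ddl_sub ts' _ _ n, ddl_shift ts' g n (q ^ t₁), ddl_cons]
        have e2 : ddl q (t₁ :: ts') g n
            = ddl q (t₁ :: ts') (fun v => P.eval (v : ℝ)) n
              + ddl q (t₁ :: ts') (fun v => ((b₀.eval ((v : ℕ) : ℚ) : ℚ) : ℝ)) n :=
          ddl_add (t₁ :: ts') _ _ n
        have e3 : ∃ Z : ℤ, ddl q (t₁ :: ts') (fun v => ((b₀.eval ((v : ℕ) : ℚ) : ℚ) : ℝ)) n = Z := by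
          set bf : ℕ → ℝ := fun v => ((b₀.eval ((v : ℕ) : ℚ) : ℚ) : ℝ) with hbf
          have s1 : ddl q (t₁ :: ts') bf n = ddl q ts' (fun v => bf (v + q ^ t₁) - bf v) n := by
            rw [ddl_sub ts' _ _ n, ddl_shift ts' bf n (q ^ t₁), ddl_cons]
          rw [s1]
          refine ddl_int ts' _ ?_ n
          intro v
          obtain ⟨z, hz⟩ := hb₀ t₁ ht₁M v
          refine ⟨z, ?_⟩
          rw [hbf]
          simp only
          have hcast : ((v + q ^ t₁ : ℕ) : ℚ) = (v : ℚ) + (q : ℚ) ^ t₁ := by push_cast; ring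
          rw [hcast]
          exact_mod_cast hz
        obtain ⟨Z, hZ⟩ := e3
        have e4 : ddl q (t₁ :: ts') (fun v => P.eval (v : ℝ)) n = x * (q : ℝ) ^ T := by
          rw [ddl_poly_value (t₁ :: ts') P (k+1) hlen hP n, hsum, hx]
        refine ⟨z₁ - Z, ?_⟩
        have efin : x * (q : ℝ) ^ T - ((z₁ - Z : ℤ) : ℝ) = ddl q ts' F n - z₁ := by
          rw [e1, e2, hZ, e4]
          push_cast
          ring
        rw [efin]
        calc |ddl q ts' F n - z₁| ≤ 2 ^ ts'.length * (2 * (K * ε)) := hz₁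
        _ = ε' := by rw [hlen', hε']; ring
      -- Step 2: chain
      have hAB : A ≤ B := by
        rw [hA, hB]
        have h1 : Amin (k+1) M ≤ Amin (k+1) (L - (k+1)) := Amin_mono _ _ _ (by omega)
        have h2 : Amin (k+1) ((L-1) + 1 - (k+1)) = Bmax (k+1) (L-1) := AB_eq (k+1) (L-1) (by omega)
        have h3 : (L - 1) + 1 - (k+1) = L - (k+1) := by omega
        rw [h3] at h2
        omega
      have hWge : 1 ≤ gamc q (k+1) * Wc q k := by
        have h1 := gamc_ge_one hq (k+1)
        have h2 := Wc_ge_one hq k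
        nlinarith
      have hqe : ((q : ℝ) + 1) * ε' < 1 := by
        have hWc : Wc q (k+1) = 4 * ((q : ℝ) + 1) * 2 ^ (k + 1) * gamc q (k + 1) * Wc q k := rfl
        have h0 : (0:ℝ) < ((q:ℝ) + 1) * ε' := by positivity
        have h1 : ε * (K * Wc q (k+1)) = 4 * (((q:ℝ) + 1) * ε') * (gamc q (k+1) * Wc q k) := by
          rw [hWc, hε']; ring
        rw [h1] at hW
        nlinarith
      obtain ⟨z, hz1, hz2⟩ := chain_lemma hq x ε' (le_of_lt hε'pos) hqe A B hAB HT
      have hqBpos : (0:ℝ) < (q : ℝ) ^ B := by positivity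
      have hqApos : (0:ℝ) < (q : ℝ) ^ A := by positivity
      have hη : |x - (z : ℝ) / (q : ℝ) ^ A| ≤ ε' / (q : ℝ) ^ B := by
        have hp : (q:ℝ) ^ (B - A) * (q:ℝ) ^ A = (q:ℝ) ^ B := by
          rw [← pow_add]; congr 1; omega
        have hzz : (z:ℝ) * (q:ℝ)^(B-A) = (z:ℝ)/(q:ℝ)^A * (q:ℝ)^B := by
          rw [div_mul_eq_mul_div, eq_div_iff (ne_of_gt hqApos)]
          rw [mul_assoc, hp]
        have hkey : x * (q:ℝ) ^ B - (z : ℝ) * (q:ℝ) ^ (B - A)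
            = (x - (z : ℝ) / (q : ℝ) ^ A) * (q:ℝ) ^ B := by
          rw [hzz]; ring
        rw [hkey, abs_mul, abs_of_pos hqBpos] at hz2
        rw [le_div_iff₀ hqBpos]
        exact hz2
      -- Step 3: construct the correction polynomial and recurse
      have hfacpos : (0:ℝ) < ((Nat.factorial (k+1) : ℕ) : ℝ) := by
        exact_mod_cast Nat.factorial_pos (k+1)
      have hfac1 : (1:ℝ) ≤ ((Nat.factorial (k+1) : ℕ) : ℝ) := by
        exact_mod_cast Nat.factorial_pos (k+1)
      set η' := P.coeff (k+1) - (z : ℝ) / ((q:ℝ)^A * ((Nat.factorial (k+1) : ℕ) : ℝ)) with hη'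
      have hη'bound : |η'| ≤ ε' / (q:ℝ)^B := by
        have hrel : η' * ((Nat.factorial (k+1):ℕ):ℝ) = x - (z:ℝ)/(q:ℝ)^A := by
          rw [hη', hx]
          field_simp
        calc |η'| ≤ |η'| * ((Nat.factorial (k+1):ℕ):ℝ) :=
              le_mul_of_one_le_right (abs_nonneg _) hfac1
        _ = |η' * ((Nat.factorial (k+1):ℕ):ℝ)| := by
              rw [abs_mul, abs_of_pos hfacpos]
        _ = |x - (z:ℝ)/(q:ℝ)^A| := by rw [hrel]
        _ ≤ ε' / (q:ℝ)^B := hη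
      set bq := bqpoly q z A (k+1) with hbq
      set br := bq.map (algebraMap ℚ ℝ) with hbr
      have hbrc : br.coeff (k+1) = (z:ℝ) / ((q:ℝ)^A * ((Nat.factorial (k+1):ℕ):ℝ)) := by
        rw [hbr, map_coeff_rat, hbq, bqpoly_coeff]
        push_cast
        ring
      have hbrdeg : br.natDegree ≤ k + 1 :=
        le_trans Polynomial.natDegree_map_le (bqpoly_natDegree z A (k+1))
      set P'' := P - br - Polynomial.C η' * Polynomial.X ^ (k+1) with hP''
      have hdeg'' : P''.natDegree ≤ k := by
        rw [Polynomial.natDegree_le_iff_coeff_eq_zero]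
        intro N hN
        rw [hP'', Polynomial.coeff_sub, Polynomial.coeff_sub, Polynomial.coeff_C_mul,
          Polynomial.coeff_X_pow]
        rcases Nat.lt_or_ge N (k+2) with hN2 | hN2
        · have hNk : N = k+1 := by omega
          rw [hNk, if_pos rfl, hbrc, hη']
          ring
        · rw [Polynomial.coeff_eq_zero_of_natDegree_lt (lt_of_le_of_lt hP (by omega)),
            Polynomial.coeff_eq_zero_of_natDegree_lt (lt_of_le_of_lt hbrdeg (by omega)),
            if_neg (by omega)]
          ring
      have hsplit : ∀ v : ℕ, P.eval ((v : ℕ) : ℝ) + ((b₀.eval ((v:ℕ):ℚ):ℚ):ℝ)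
          = P''.eval ((v : ℕ) : ℝ) + (((b₀ + bq).eval ((v:ℕ):ℚ) : ℚ):ℝ) + η' * ((v:ℕ):ℝ)^(k+1) := by
        intro v
        have hbrev : br.eval ((v:ℕ):ℝ) = ((bq.eval ((v:ℕ):ℚ):ℚ):ℝ) := by
          rw [hbr]; exact map_eval_nat bq v
        rw [hP'']
        rw [Polynomial.eval_sub, Polynomial.eval_sub, Polynomial.eval_mul, Polynomial.eval_C,
          Polynomial.eval_pow, Polynomial.eval_X, Polynomial.eval_add, hbrev]
        push_cast
        ring
      set K' := gamc q (k+1) * K with hK'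
      have happ' : ∀ n : ℕ, n < q ^ L → n ∉ bad → ∃ θ : ℝ, |θ| ≤ K' * ε ∧
          f n = e (P''.eval (n : ℝ) + (((b₀ + bq).eval (n:ℚ) : ℚ):ℝ) + θ) := by
        intro n hn hnb
        obtain ⟨θ, hθ, hfeq⟩ := happ n hn hnb
        refine ⟨θ + η' * ((n:ℕ):ℝ)^(k+1), ?_, ?_⟩
        · have hn' : ((n:ℕ):ℝ) ^ (k+1) ≤ (q:ℝ) ^ ((k+1) * L) := by
            have h1 : ((n:ℕ):ℝ) ≤ (q:ℝ)^L := by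
              have h2 : (n:ℝ) ≤ ((q^L : ℕ):ℝ) := by exact_mod_cast le_of_lt hn
              rwa [Nat.cast_pow] at h2
            calc ((n:ℕ):ℝ)^(k+1) ≤ ((q:ℝ)^L)^(k+1) := by
                  exact pow_le_pow_left₀ (by positivity) h1 _
            _ = (q:ℝ)^((k+1)*L) := by rw [← pow_mul, Nat.mul_comm L (k+1)]
          have hexp : (k+1) * L ≤ B + 2 * ((k+1)*(k+1)) := by
            have h3 := Bmax_lower (k+1) L (by omega)
            rw [← hB] at h3
            omega
          have h2 : (q:ℝ)^((k+1)*L) ≤ (q:ℝ)^B * (q:ℝ)^(2*((k+1)*(k+1))) := by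
            rw [← pow_add]
            exact pow_le_pow_right₀ (by exact_mod_cast (by omega : 1 ≤ q)) hexp
          have h3 : |η' * ((n:ℕ):ℝ)^(k+1)| ≤ ε' * (q:ℝ)^(2*((k+1)*(k+1))) := by
            rw [abs_mul, _root_.abs_of_nonneg (by positivity : (0:ℝ) ≤ ((n:ℕ):ℝ)^(k+1))]
            calc |η'| * ((n:ℕ):ℝ)^(k+1)
                ≤ (ε'/(q:ℝ)^B) * ((q:ℝ)^B * (q:ℝ)^(2*((k+1)*(k+1)))) := by
                  exact mul_le_mul hη'bound (le_trans hn' h2) (by positivity) (by positivity)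
            _ = ε' * (q:ℝ)^(2*((k+1)*(k+1))) := by field_simp
          have hgam : gamc q (k+1) = 1 + 2^(k+1) * (q:ℝ)^(2*((k+1)*(k+1))) := rfl
          calc |θ + η' * ((n:ℕ):ℝ)^(k+1)| ≤ |θ| + |η' * ((n:ℕ):ℝ)^(k+1)| := abs_add_le _ _
          _ ≤ K * ε + ε' * (q:ℝ)^(2*((k+1)*(k+1))) := add_le_add hθ h3
          _ = K' * ε := by rw [hK', hgam, hε']; ring
        · rw [hfeq]
          congr 1
          have := hsplit n
          linarith [this]
      have hMA : M ≤ A := by rw [hA]; exact Amin_ge (k+1) M (by omega)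
      have hM' : 1 ≤ A + (k+1) := by omega
      have hK'1 : 1 ≤ K' := by
        have h1 := gamc_ge_one hq (k+1)
        rw [hK']
        nlinarith
      have hsmall' : δ * ((2*q:ℕ):ℝ)^k < 1 := by
        have h1 : (1:ℝ) ≤ ((2*q:ℕ):ℝ) := by exact_mod_cast (by omega : 1 ≤ 2*q)
        have h2 : ((2*q:ℕ):ℝ)^k ≤ ((2*q:ℕ):ℝ)^(k+1) := pow_le_pow_right₀ h1 (by omega)
        calc δ * ((2*q:ℕ):ℝ)^k ≤ δ * ((2*q:ℕ):ℝ)^(k+1) := mul_le_mul_of_nonneg_left h2 hδ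
        _ < 1 := hsmall
      have hMle : A + (k+1) ≤ (k+1)*M + (k+1)*(k+1) + (k+1) := by
        have h1 := Amin_le (k+1) M
        rw [hA]
        omega
      have hLam' : Lamc k (A + (k+1)) ≤ L := by
        refine le_trans (Lamc_mono k _ _ hMle) ?_
        refine le_trans ?_ hLam
        have h1 : Lamc (k+1) M = max (M + k + 3) (Lamc k ((k+1)*M + (k+1)*(k+1) + (k+1))) := rfl
        rw [h1]
        exact le_max_right _ _
      have hW' : ε * (K' * Wc q k) ≤ 1 := by
        have hWc : Wc q (k+1) = 4*((q:ℝ)+1)*2^(k+1) * gamc q (k+1) * Wc q k := rfl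
        have h1 : ε * (K' * Wc q k) * (4*((q:ℝ)+1)*2^(k+1)) = ε * (K * Wc q (k+1)) := by
          rw [hK', hWc]; ring
        have h2 : (1:ℝ) ≤ 4*((q:ℝ)+1)*2^(k+1) := by
          have hq0 : (0:ℝ) ≤ q := by positivity
          have h3 : (1:ℝ) ≤ (2:ℝ)^(k+1) := one_le_pow₀ (by norm_num)
          have h5 : (1:ℝ) ≤ 4*((q:ℝ)+1) := by linarith
          calc (1:ℝ) = 1 * 1 := by ring
          _ ≤ (4*((q:ℝ)+1)) * 2^(k+1) := mul_le_mul h5 h3 (by norm_num) (by linarith)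
        have h4 : 0 ≤ ε * (K' * Wc q k) := by
          have h5 := Wc_ge_one hq k
          have h6 : (0:ℝ) ≤ K' := by linarith
          have h7 : (0:ℝ) ≤ Wc q k := by linarith
          positivity
        calc ε * (K' * Wc q k) ≤ ε * (K' * Wc q k) * (4*((q:ℝ)+1)*2^(k+1)) :=
              le_mul_of_one_le_right h4 h2
        _ = ε * (K * Wc q (k+1)) := h1
        _ ≤ 1 := hW
      have hIS : IntShift q (A + (k+1)) (b₀ + bq) := by
        refine IntShift_add (IntShift_mono (by omega : M ≤ A + (k+1)) hb₀) ?_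
        rw [hbq]
        exact bqpoly_IntShift hq z A (k+1) (by omega)
      obtain ⟨α, β, b, m, hm, hper, hfin⟩ :=
        ih (A + (k+1)) K' P'' (b₀ + bq) hM' hK'1 hsmall' hLam' hW' hdeg'' hIS happ'
      refine ⟨α, β, b, m, ?_, hper, ?_⟩
      · refine le_trans hm (le_trans (Xic_mono k _ _ hMle) ?_)
        have h1 : Xic (k+1) M = Xic k ((k+1)*M + (k+1)*(k+1) + (k+1)) := rfl
        rw [h1]
      · intro n hn hnb
        obtain ⟨θ, hθ, hfeq⟩ := hfin n hn hnb
        refine ⟨θ, ?_, hfeq⟩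
        have hPh : Phic q (k+1) = gamc q (k+1) * Phic q k := rfl
        rw [hPh]
        rw [hK'] at hθ
        calc |θ| ≤ Phic q k * (gamc q (k+1) * K) * ε := hθ
        _ = gamc q (k+1) * Phic q k * K * ε := by ring

end MasterSec

attribute [local instance] Classical.propDecidable

theorem stmt12' (q s : ℕ) (hq : 2 ≤ q) (hs : 2 ≤ s) :
    ∃ ε₀ > (0 : ℝ), ∃ δ₀ > (0 : ℝ), ∃ L₀ : ℕ, 0 < L₀ ∧ ∃ C₁ : ℕ, ∃ C₂ > (0 : ℝ),
      ∀ f : ℕ → ℂ, QMult q f → (∀ n, ‖f n‖ = 1) →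
        ∀ p : Polynomial ℝ, p.natDegree < s →
          ∀ ε δ : ℝ, 0 < ε → ε < ε₀ → 0 < δ → δ < δ₀ →
            ∀ L : ℕ, L₀ ≤ L →
              (((Finset.range (q ^ L)).filter fun n =>
                  ¬ ∃ θ : ℝ, |θ| ≤ ε ∧ f n = e (p.eval (n : ℝ) + θ)).card : ℝ)
                ≤ δ * q ^ L →
              ∃ α β : ℝ, ∃ b : Polynomial ℚ, ∃ m : ℕ, m ≤ C₁ ∧
                (∀ n : ℕ, Int.fract (b.eval ((n : ℚ) + q ^ m)) = Int.fract (b.eval (n : ℚ))) ∧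
                (((Finset.range (q ^ L)).filter fun n =>
                    ¬ ∃ θ : ℝ, |θ| ≤ C₂ * ε ∧
                      f n = e (α * n + β + ((b.eval (n : ℚ) : ℚ) : ℝ) + θ)).card : ℝ)
                  ≤ δ * q ^ L := by
  have hW1 := Wc_ge_one hq (s - 1)
  have hWpos : (0:ℝ) < Wc q (s - 1) := by linarith
  have h2q1 : (1:ℝ) ≤ ((2 * q : ℕ) : ℝ) := by exact_mod_cast (by omega : 1 ≤ 2 * q)
  have h2qpos : (0:ℝ) < ((2 * q : ℕ) : ℝ) ^ (s - 1) := by positivity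
  refine ⟨1 / Wc q (s - 1), by positivity, 1 / ((2 * q : ℕ) : ℝ) ^ (s - 1), by positivity,
    Lamc (s - 1) 1, Lamc_ge_one _ _, Xic (s - 1) 1, Phic q (s - 1),
    by linarith [Phic_ge_one hq (s - 1)], ?_⟩
  intro f hQM hf p hpdeg ε δ hε hεε₀ hδ hδδ₀ L hL hcard
  set bad := (Finset.range (q ^ L)).filter
    (fun n => ¬ ∃ θ : ℝ, |θ| ≤ ε ∧ f n = e (p.eval (n : ℝ) + θ)) with hbaddef
  have happ : ∀ n : ℕ, n < q ^ L → n ∉ bad →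
      ∃ θ : ℝ, |θ| ≤ 1 * ε ∧
        f n = e (p.eval (n : ℝ) + (((0 : Polynomial ℚ).eval (n : ℚ) : ℚ) : ℝ) + θ) := by
    intro n hn hnb
    have hmem : n ∈ Finset.range (q ^ L) := Finset.mem_range.mpr hn
    have hP : ∃ θ : ℝ, |θ| ≤ ε ∧ f n = e (p.eval (n : ℝ) + θ) := by
      by_contra hcon
      exact hnb (Finset.mem_filter.mpr ⟨hmem, hcon⟩)
    obtain ⟨θ, hθ, hfeq⟩ := hP
    refine ⟨θ, by linarith, ?_⟩
    rw [hfeq]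
    congr 1
    simp
  have hmaster := master q hq f hQM hf ε δ hε (le_of_lt hδ) L bad
    (by rw [hbaddef]; exact hcard) (s - 1) 1 1 p 0
    le_rfl le_rfl
    (by
      have : δ * ((2 * q : ℕ) : ℝ) ^ (s - 1) < (1 / ((2 * q : ℕ) : ℝ) ^ (s - 1)) * ((2 * q : ℕ) : ℝ) ^ (s - 1) :=
        mul_lt_mul_of_pos_right hδδ₀ h2qpos
      rwa [one_div, inv_mul_cancel₀ (ne_of_gt h2qpos)] at this)
    hL
    (by
      rw [one_mul]
      have : ε * Wc q (s - 1) < (1 / Wc q (s - 1)) * Wc q (s - 1) :=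
        mul_lt_mul_of_pos_right hεε₀ hWpos
      rw [one_div, inv_mul_cancel₀ (ne_of_gt hWpos)] at this
      linarith)
    (by omega)
    (IntShift_zero 1)
    happ
  obtain ⟨α, β, b, m, hm, hper, hfin⟩ := hmaster
  refine ⟨α, β, b, m, hm, ?_, ?_⟩
  · intro n
    obtain ⟨z, hz⟩ := hper n
    exact Int.fract_eq_fract.mpr ⟨z, hz⟩
  · have hsub : (Finset.range (q ^ L)).filter
        (fun n => ¬ ∃ θ : ℝ, |θ| ≤ Phic q (s - 1) * ε ∧
          f n = e (α * n + β + ((b.eval (n : ℚ) : ℚ) : ℝ) + θ)) ⊆ bad := by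
      intro n hn
      rw [Finset.mem_filter] at hn
      obtain ⟨hn1, hn2⟩ := hn
      by_contra hnb
      obtain ⟨θ, hθ, hfeq⟩ := hfin n (Finset.mem_range.mp hn1) hnb
      refine hn2 ⟨θ, ?_, hfeq⟩
      calc |θ| ≤ Phic q (s - 1) * 1 * ε := hθ
      _ = Phic q (s - 1) * ε := by ring
    calc (((Finset.range (q ^ L)).filter
        (fun n => ¬ ∃ θ : ℝ, |θ| ≤ Phic q (s - 1) * ε ∧
          f n = e (α * n + β + ((b.eval (n : ℚ) : ℚ) : ℝ) + θ))).card : ℝ)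
        ≤ (bad.card : ℝ) := by exact_mod_cast Finset.card_le_card hsub
    _ ≤ δ * (q : ℝ) ^ L := by rw [hbaddef]; exact hcard


attribute [local instance] Classical.propDecidable

/-- Rigidity of pretentious `q`-multiplicative sequences: if `f`
is close to a polynomial phase `e(p(n))` of degree `< s` on most of `[0, q^L)`, then
`f` is close, on most of `[0, q^L)`, to `e(αn + β + b(n))` for a rational polynomial
`b` whose reduction mod 1 is periodic with period a power of `q` at most `q^{C₁}`. -/
theorem stmt12 (q s : ℕ) (hq : 2 ≤ q) (hs : 2 ≤ s) :
    ∃ ε₀ > (0 : ℝ), ∃ δ₀ > (0 : ℝ), ∃ L₀ : ℕ, 0 < L₀ ∧ ∃ C₁ : ℕ, ∃ C₂ > (0 : ℝ),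
      ∀ f : ℕ → ℂ, QMult q f → (∀ n, ‖f n‖ = 1) →
        ∀ p : Polynomial ℝ, p.natDegree < s →
          ∀ ε δ : ℝ, 0 < ε → ε < ε₀ → 0 < δ → δ < δ₀ →
            ∀ L : ℕ, L₀ ≤ L →
              (((Finset.range (q ^ L)).filter fun n =>
                  ¬ ∃ θ : ℝ, |θ| ≤ ε ∧ f n = e (p.eval (n : ℝ) + θ)).card : ℝ)
                ≤ δ * q ^ L →
              ∃ α β : ℝ, ∃ b : Polynomial ℚ, ∃ m : ℕ, m ≤ C₁ ∧
                (∀ n : ℕ, Int.fract (b.eval ((n : ℚ) + q ^ m)) = Int.fract (b.eval (n : ℚ))) ∧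
                (((Finset.range (q ^ L)).filter fun n =>
                    ¬ ∃ θ : ℝ, |θ| ≤ C₂ * ε ∧
                      f n = e (α * n + β + ((b.eval (n : ℚ) : ℚ) : ℝ) + θ)).card : ℝ)
                  ≤ δ * q ^ L := by
  exact stmt12' q s hq hs
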